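/- arXiv:2011.06549 — 14 statements merged into one kernel-verified Lean document; each statement's English description precedes it below -/
import Mathlib

section
/- Let (P, ≤) be a finite partially ordered set, f : P → ℝ, and g its zeta transform. Let T ⊆ P be sup-closed with supp(f) ⊆ T. Then for every y ∈ T one has f(y) = Σ_{s ∈ T, s ≤ y} g(s) · μ_T(s, y), where μ_T is the Möbius function of T with the order induced from P; moreover f(y) = 0 for every y ∈ P \ T. -/
open Classical

/-- **Efficient Möbius inversion formula** (additive form).
If `T` is a sup-closed subset of a finite poset `P` containing the support of `f`,
and `g` is the zeta transform of `f`, then on `T` the Möbius transform of `g`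
computed inside `T` recovers `f`, and `f` vanishes outside `T`. -/
theorem stmt_0 {P : Type*} [PartialOrder P] [Fintype P]
    (f g : P → ℝ)
    (hg : ∀ y : P, g y = ∑ x ∈ Finset.univ.filter (fun x => x ≤ y), f x)
    (T : Set P)
    (hT : ∀ F : Set P, F ⊆ T → F.Nonempty → ∃ s ∈ T, IsLUB F s)
    (hsupp : ∀ x : P, f x ≠ 0 → x ∈ T)
    (μ : P → P → ℤ)
    (hμ₁ : ∀ s ∈ T, μ s s = 1)
    (hμ₂ : ∀ s ∈ T, ∀ y ∈ T, s < y →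
      ∑ z ∈ Finset.univ.filter (fun z => z ∈ T ∧ s ≤ z ∧ z ≤ y), μ z y = 0) :
    (∀ y ∈ T, f y = ∑ s ∈ Finset.univ.filter (fun s => s ∈ T ∧ s ≤ y), g s * (μ s y : ℝ))
    ∧ ∀ y : P, y ∉ T → f y = 0 := by
  have hzero : ∀ y : P, y ∉ T → f y = 0 := by
    intro y hy
    by_contra h
    exact hy (hsupp y h)
  refine ⟨?_, hzero⟩
  intro y hy
  -- rewrite g s as a sum over T
  have hrw : ∀ s : P, g s = ∑ x ∈ Finset.univ.filter (fun x => x ∈ T ∧ x ≤ s), f x := by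
    intro s
    rw [hg s]
    symm
    apply Finset.sum_subset
    · intro x hx
      simp only [Finset.mem_filter] at hx ⊢
      exact ⟨hx.1, hx.2.2⟩
    · intro x hx hx'
      by_contra h
      simp only [Finset.mem_filter] at hx hx'
      exact hx' ⟨hx.1, hsupp x h, hx.2⟩
  symm
  calc ∑ s ∈ Finset.univ.filter (fun s => s ∈ T ∧ s ≤ y), g s * (μ s y : ℝ)
      = ∑ s ∈ Finset.univ.filter (fun s => s ∈ T ∧ s ≤ y),
          ∑ x ∈ Finset.univ.filter (fun x => x ∈ T ∧ x ≤ s), f x * (μ s y : ℝ) := by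
        refine Finset.sum_congr rfl fun s _ => ?_
        rw [hrw s, Finset.sum_mul]
    _ = ∑ x ∈ Finset.univ.filter (fun x => x ∈ T ∧ x ≤ y),
          ∑ s ∈ Finset.univ.filter (fun s => s ∈ T ∧ x ≤ s ∧ s ≤ y), f x * (μ s y : ℝ) := by
        apply Finset.sum_comm'
        intro s x
        simp only [Finset.mem_filter, Finset.mem_univ, true_and]
        constructor
        · rintro ⟨⟨hs, hsy⟩, hx, hxs⟩
          exact ⟨⟨hs, hxs, hsy⟩, hx, le_trans hxs hsy⟩
        · rintro ⟨⟨hs, hxs, hsy⟩, hx, _⟩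
          exact ⟨⟨hs, hsy⟩, hx, hxs⟩
    _ = ∑ x ∈ Finset.univ.filter (fun x => x ∈ T ∧ x ≤ y),
          f x * ((∑ s ∈ Finset.univ.filter (fun s => s ∈ T ∧ x ≤ s ∧ s ≤ y), μ s y : ℤ) : ℝ) := by
        refine Finset.sum_congr rfl fun x _ => ?_
        push_cast
        rw [Finset.mul_sum]
    _ = ∑ x ∈ Finset.univ.filter (fun x => x ∈ T ∧ x ≤ y),
          f x * (if x = y then (1 : ℝ) else 0) := by
        refine Finset.sum_congr rfl fun x hx => ?_
        simp only [Finset.mem_filter, Finset.mem_univ, true_and] at hx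
        obtain ⟨hxT, hxy⟩ := hx
        rcases eq_or_lt_of_le hxy with heq | hlt
        · subst heq
          have : Finset.univ.filter (fun s => s ∈ T ∧ x ≤ s ∧ s ≤ x) = {x} := by
            ext s
            simp only [Finset.mem_filter, Finset.mem_univ, true_and, Finset.mem_singleton]
            constructor
            · rintro ⟨_, h1, h2⟩; exact le_antisymm h2 h1
            · rintro rfl; exact ⟨hxT, le_refl _, le_refl _⟩
          rw [this, if_pos rfl, Finset.sum_singleton, hμ₁ x hxT]
          norm_num
        · rw [hμ₂ x hxT y hy hlt, if_neg (ne_of_lt hlt)]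
          norm_num
    _ = f y := by
        simp only [mul_ite, mul_one, mul_zero]
        rw [Finset.sum_ite_eq']
        simp [hy]
end

section
/- Let (P, ≤) be a finite partially ordered set, h : P → ℝ with h(x) ≠ 0 for all x ∈ P, and let G(y) = Π_{x ≤ y} h(x). Let T ⊆ P be sup-closed with {x ∈ P : h(x) ≠ 1} ⊆ T. Then for every y ∈ T one has h(y) = Π_{s ∈ T, s ≤ y} G(s)^{μ_T(s, y)} (integer exponents, where μ_T is the Möbius function of T with the order induced from P), and h(y) = 1 for every y ∈ P \ T. -/
open Classical

lemma prod_zpow_eq_zpow_sum {ι : Type*} (a : ℝ) (ha : a ≠ 0) (s : Finset ι) (f : ι → ℤ) :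
    ∏ i ∈ s, a ^ f i = a ^ (∑ i ∈ s, f i) := by
  classical
  induction s using Finset.induction_on with
  | empty => simp
  | insert _ _ hx ih =>
    rw [Finset.prod_insert hx, Finset.sum_insert hx, ih, zpow_add₀ ha]

/-- **Efficient Möbius inversion formula** (multiplicative form). -/
theorem stmt_1 {P : Type*} [PartialOrder P] [Fintype P]
    (h G : P → ℝ)
    (hne : ∀ x : P, h x ≠ 0)
    (hG : ∀ y : P, G y = ∏ x ∈ Finset.univ.filter (fun x => x ≤ y), h x)
    (T : Set P)
    (hT : ∀ F : Set P, F ⊆ T → F.Nonempty → ∃ s ∈ T, IsLUB F s)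
    (hsupp : ∀ x : P, h x ≠ 1 → x ∈ T)
    (μ : P → P → ℤ)
    (hμ₁ : ∀ s ∈ T, μ s s = 1)
    (hμ₂ : ∀ s ∈ T, ∀ y ∈ T, s < y →
      ∑ z ∈ Finset.univ.filter (fun z => z ∈ T ∧ s ≤ z ∧ z ≤ y), μ z y = 0) :
    (∀ y ∈ T, h y = ∏ s ∈ Finset.univ.filter (fun s => s ∈ T ∧ s ≤ y), G s ^ (μ s y))
    ∧ ∀ y : P, y ∉ T → h y = 1 := by
  have h2 : ∀ y : P, y ∉ T → h y = 1 := by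
    intro y hy
    by_contra hne1
    exact hy (hsupp y hne1)
  -- G restricted to T
  have hGT : ∀ s : P, G s = ∏ x ∈ Finset.univ.filter (fun x => x ∈ T ∧ x ≤ s), h x := by
    intro s
    rw [hG s]
    refine (Finset.prod_subset ?_ ?_).symm
    · intro x hx
      simp only [Finset.mem_filter] at hx ⊢
      exact ⟨hx.1, hx.2.2⟩
    · intro x hx hx'
      simp only [Finset.mem_filter] at hx hx'
      exact h2 x (fun hxT => hx' ⟨hx.1, hxT, hx.2⟩)
  refine ⟨?_, h2⟩
  intro y hy
  symm
  calc ∏ s ∈ Finset.univ.filter (fun s => s ∈ T ∧ s ≤ y), G s ^ (μ s y)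
      = ∏ s ∈ Finset.univ.filter (fun s => s ∈ T ∧ s ≤ y),
          ∏ x ∈ Finset.univ.filter (fun x => x ∈ T ∧ x ≤ s), h x ^ (μ s y) := by
        refine Finset.prod_congr rfl fun s _ => ?_
        rw [hGT s, ← Finset.prod_zpow]
    _ = ∏ x ∈ Finset.univ.filter (fun x => x ∈ T ∧ x ≤ y),
          ∏ s ∈ Finset.univ.filter (fun s => s ∈ T ∧ x ≤ s ∧ s ≤ y), h x ^ (μ s y) := by
        refine Finset.prod_comm' ?_
        intro s x
        simp only [Finset.mem_filter, Finset.mem_univ, true_and]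
        constructor
        · rintro ⟨⟨hsT, hsy⟩, hxT, hxs⟩
          exact ⟨⟨hsT, hxs, hsy⟩, hxT, hxs.trans hsy⟩
        · rintro ⟨⟨hsT, hxs, hsy⟩, hxT, _⟩
          exact ⟨⟨hsT, hsy⟩, hxT, hxs⟩
    _ = ∏ x ∈ Finset.univ.filter (fun x => x ∈ T ∧ x ≤ y),
          h x ^ (∑ s ∈ Finset.univ.filter (fun s => s ∈ T ∧ x ≤ s ∧ s ≤ y), μ s y) := by
        exact Finset.prod_congr rfl fun x _ => prod_zpow_eq_zpow_sum _ (hne x) _ _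
    _ = h y := by
        rw [Finset.prod_eq_single y]
        · have : Finset.univ.filter (fun s => s ∈ T ∧ y ≤ s ∧ s ≤ y) = {y} := by
            ext s
            simp only [Finset.mem_filter, Finset.mem_univ, true_and, Finset.mem_singleton]
            constructor
            · rintro ⟨_, hys, hsy⟩; exact le_antisymm hsy hys
            · rintro rfl; exact ⟨hy, le_rfl, le_rfl⟩
          rw [this, Finset.sum_singleton, hμ₁ y hy, zpow_one]
        · intro x hx hxy
          simp only [Finset.mem_filter, Finset.mem_univ, true_and] at hx
          rw [hμ₂ x hx.1 y hy (lt_of_le_of_ne hx.2 hxy), zpow_zero]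
        · intro hyy
          simp only [Finset.mem_filter, Finset.mem_univ, true_and] at hyy
          exact absurd ⟨hy, le_rfl⟩ hyy
end

section
/- Let (P, ≤) be a finite partially ordered set and T ⊆ P a sup-closed subset. For s ∈ T and y ∈ P define η(s, y) = Σ_{z ∈ P : z ≤ y and s is the greatest element of {t ∈ T : t ≤ z}} μ_P(z, y). Then η(s, s) = 1 for every s ∈ T, and for every s ∈ T and y ∈ P with s < y one has η(s, y) = − Σ_{p ∈ T, s < p ≤ y} η(p, y). -/
open Classical

/-- The Möbius function aggregate `η` satisfies `η s s = 1` on a sup-closed subset `T`,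
and a recursion identical to that of the Möbius function of `T`. -/
theorem stmt_2 {P : Type*} [PartialOrder P] [Fintype P]
    (T : Set P)
    (hT : ∀ F : Set P, F ⊆ T → F.Nonempty → ∃ s ∈ T, IsLUB F s)
    (μ : P → P → ℤ)
    (hμ₁ : ∀ x : P, μ x x = 1)
    (hμ₂ : ∀ x y : P, x < y →
      ∑ z ∈ Finset.univ.filter (fun z => x ≤ z ∧ z ≤ y), μ z y = 0)
    (η : P → P → ℤ)
    (hη : ∀ s y : P, η s y =
      ∑ z ∈ Finset.univ.filter
        (fun z => z ≤ y ∧ s ∈ T ∧ s ≤ z ∧ ∀ t ∈ T, t ≤ z → t ≤ s), μ z y) :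
    (∀ s ∈ T, η s s = 1) ∧
    ∀ s ∈ T, ∀ y : P, s < y →
      η s y = - ∑ p ∈ Finset.univ.filter (fun p => p ∈ T ∧ s < p ∧ p ≤ y), η p y := by
  have hgreat : ∀ {s z : P}, s ∈ T → s ≤ z →
      ∃ p, p ∈ T ∧ p ≤ z ∧ ∀ t ∈ T, t ≤ z → t ≤ p := by
    intro s z hs hsz
    obtain ⟨p, hpT, hlub⟩ := hT {t | t ∈ T ∧ t ≤ z} (fun t ht => ht.1) ⟨s, hs, hsz⟩
    exact ⟨p, hpT, hlub.2 (fun t ht => ht.2), fun t htT htz => hlub.1 ⟨htT, htz⟩⟩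
  constructor
  · intro s hs
    rw [hη]
    have hset : Finset.univ.filter
        (fun z => z ≤ s ∧ s ∈ T ∧ s ≤ z ∧ ∀ t ∈ T, t ≤ z → t ≤ s) = {s} := by
      ext z
      simp only [Finset.mem_filter, Finset.mem_univ, true_and, Finset.mem_singleton]
      constructor
      · rintro ⟨h1, _, h2, _⟩; exact le_antisymm h1 h2
      · rintro rfl; exact ⟨le_rfl, hs, le_rfl, fun t _ h => h⟩
    rw [hset, Finset.sum_singleton, hμ₁]
  · intro s hs y hsy
    set A := Finset.univ.filter (fun p => p ∈ T ∧ s ≤ p ∧ p ≤ y) with hAdef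
    set C := Finset.univ.filter (fun z => s ≤ z ∧ z ≤ y) with hCdef
    -- the "greatest element" map
    have hgdef : ∀ z, s ≤ z → ∃ p, p ∈ T ∧ p ≤ z ∧ ∀ t ∈ T, t ≤ z → t ≤ p :=
      fun z hz => hgreat hs hz
    classical
    let g : P → P := fun z => if h : s ≤ z then (hgdef z h).choose else z
    have hgspec : ∀ z (h : s ≤ z), g z ∈ T ∧ g z ≤ z ∧ ∀ t ∈ T, t ≤ z → t ≤ g z := by
      intro z h
      simp only [g, dif_pos h]
      exact (hgdef z h).choose_spec
    have hmaps : ∀ z ∈ C, g z ∈ A := by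
      intro z hz
      simp only [hCdef, Finset.mem_filter, Finset.mem_univ, true_and] at hz
      obtain ⟨hgT, hgz, hgmx⟩ := hgspec z hz.1
      simp only [hAdef, Finset.mem_filter, Finset.mem_univ, true_and]
      exact ⟨hgT, hgmx s hs hz.1, le_trans hgz hz.2⟩
    have hfiber := Finset.sum_fiberwise_of_maps_to hmaps (fun z => μ z y)
    have hC0 : ∑ z ∈ C, μ z y = 0 := hμ₂ s y hsy
    have hAeta : ∀ p ∈ A, η p y = ∑ z ∈ C.filter (fun z => g z = p), μ z y := by
      intro p hp
      simp only [hAdef, Finset.mem_filter, Finset.mem_univ, true_and] at hp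
      obtain ⟨hpT, hsp, hpy⟩ := hp
      rw [hη]
      congr 1
      ext z
      simp only [hCdef, Finset.mem_filter, Finset.mem_univ, true_and]
      constructor
      · rintro ⟨hzy, _, hpz, hmax⟩
        have hsz : s ≤ z := le_trans hsp hpz
        obtain ⟨hgT, hgz, hgmx⟩ := hgspec z hsz
        exact ⟨⟨hsz, hzy⟩, le_antisymm (hmax _ hgT hgz) (hgmx p hpT hpz)⟩
      · rintro ⟨⟨hsz, hzy⟩, hgp⟩
        obtain ⟨hgT, hgz, hgmx⟩ := hgspec z hsz
        rw [hgp] at hgz hgmx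
        exact ⟨hzy, hpT, hgz, hgmx⟩
    have hsumA : ∑ p ∈ A, η p y = 0 := by
      rw [Finset.sum_congr rfl hAeta, hfiber, hC0]
    -- split A at s
    have hsA : A = insert s (Finset.univ.filter (fun p => p ∈ T ∧ s < p ∧ p ≤ y)) := by
      ext p
      simp only [hAdef, Finset.mem_filter, Finset.mem_univ, true_and, Finset.mem_insert]
      constructor
      · rintro ⟨hpT, hsp, hpy⟩
        rcases eq_or_lt_of_le hsp with h | h
        · exact Or.inl h.symm
        · exact Or.inr ⟨hpT, h, hpy⟩
      · rintro (rfl | ⟨hpT, hsp, hpy⟩)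
        · exact ⟨hs, le_refl p, le_of_lt hsy⟩
        · exact ⟨hpT, le_of_lt hsp, hpy⟩
    have hnot : s ∉ Finset.univ.filter (fun p => p ∈ T ∧ s < p ∧ p ≤ y) := by
      simp only [Finset.mem_filter, Finset.mem_univ, true_and]
      rintro ⟨_, h, _⟩
      exact lt_irrefl s h
    rw [hsA, Finset.sum_insert hnot] at hsumA
    linarith
end

section
/- Let (P, ≤) be a finite partially ordered set and T ⊆ P a sup-closed subset. For s ∈ T and y ∈ P define η(s, y) = Σ_{z ∈ P : z ≤ y and s is the greatest element of {t ∈ T : t ≤ z}} μ_P(z, y). Then for all s, y ∈ T with s ≤ y one has η(s, y) = μ_T(s, y), where μ_T is the Möbius function of T with the order induced from P. -/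
open Classical

/-- On a sup-closed subset `T` of a finite poset, the Möbius function aggregate `η`
coincides with the Möbius function of `T` (with the induced order). -/
theorem stmt_3 {P : Type*} [PartialOrder P] [Fintype P]
    (T : Set P)
    (hT : ∀ F : Set P, F ⊆ T → F.Nonempty → ∃ s ∈ T, IsLUB F s)
    (μ : P → P → ℤ)
    (hμ₁ : ∀ x : P, μ x x = 1)
    (hμ₂ : ∀ x y : P, x < y →
      ∑ z ∈ Finset.univ.filter (fun z => x ≤ z ∧ z ≤ y), μ z y = 0)
    (η : P → P → ℤ)
    (hη : ∀ s y : P, η s y =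
      ∑ z ∈ Finset.univ.filter
        (fun z => z ≤ y ∧ s ∈ T ∧ s ≤ z ∧ ∀ t ∈ T, t ≤ z → t ≤ s), μ z y)
    (μT : P → P → ℤ)
    (hμT₁ : ∀ s ∈ T, μT s s = 1)
    (hμT₂ : ∀ s ∈ T, ∀ y ∈ T, s < y →
      ∑ z ∈ Finset.univ.filter (fun z => z ∈ T ∧ s ≤ z ∧ z ≤ y), μT z y = 0) :
    ∀ s ∈ T, ∀ y ∈ T, s ≤ y → η s y = μT s y := by
  -- existence of a greatest element of {t ∈ T : t ≤ z} when some s ∈ T lies below z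
  have hg : ∀ z : P, ∀ s, s ∈ T → s ≤ z →
      ∃ g, g ∈ T ∧ g ≤ z ∧ s ≤ g ∧ ∀ t ∈ T, t ≤ z → t ≤ g := by
    intro z s hs hsz
    obtain ⟨g, hgT, hlub⟩ := hT {t | t ∈ T ∧ t ≤ z} (fun t ht => ht.1) ⟨s, hs, hsz⟩
    exact ⟨g, hgT, hlub.2 (fun t ht => ht.2), hlub.1 ⟨hs, hsz⟩,
      fun t htT htz => hlub.1 ⟨htT, htz⟩⟩
  -- (A) diagonal values of η
  have hA : ∀ y ∈ T, η y y = 1 := by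
    intro y hy
    rw [hη]
    have hfil : Finset.univ.filter
        (fun z => z ≤ y ∧ y ∈ T ∧ y ≤ z ∧ ∀ t ∈ T, t ≤ z → t ≤ y) = {y} := by
      ext z
      simp only [Finset.mem_filter, Finset.mem_univ, true_and, Finset.mem_singleton]
      constructor
      · rintro ⟨h1, _, h3, _⟩; exact le_antisymm h1 h3
      · rintro rfl; exact ⟨le_rfl, hy, le_rfl, fun t _ ht => ht⟩
    rw [hfil, Finset.sum_singleton, hμ₁]
  -- (B) η satisfies the defining recursion of μT
  have hB : ∀ s ∈ T, ∀ y ∈ T, s < y →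
      ∑ t ∈ Finset.univ.filter (fun t => t ∈ T ∧ s ≤ t ∧ t ≤ y), η t y = 0 := by
    intro s hs y hy hsy
    have hswap : ∑ t ∈ Finset.univ.filter (fun t => t ∈ T ∧ s ≤ t ∧ t ≤ y), η t y
        = ∑ z ∈ Finset.univ.filter (fun z => s ≤ z ∧ z ≤ y), μ z y := by
      have step1 : ∑ t ∈ Finset.univ.filter (fun t => t ∈ T ∧ s ≤ t ∧ t ≤ y), η t y
          = ∑ t ∈ Finset.univ.filter (fun t => t ∈ T ∧ s ≤ t ∧ t ≤ y),
              ∑ z ∈ Finset.univ, (if z ≤ y ∧ t ∈ T ∧ t ≤ z ∧ (∀ u ∈ T, u ≤ z → u ≤ t)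
                then μ z y else 0) := by
        refine Finset.sum_congr rfl (fun t _ => ?_)
        rw [hη, Finset.sum_filter]
      rw [step1, Finset.sum_comm]
      rw [Finset.sum_filter]
      refine Finset.sum_congr rfl (fun z _ => ?_)
      by_cases hz : s ≤ z ∧ z ≤ y
      · rw [if_pos hz]
        obtain ⟨g, hgT, hgz, hsg, hgmax⟩ := hg z s hs hz.1
        have hgmem : g ∈ Finset.univ.filter (fun t => t ∈ T ∧ s ≤ t ∧ t ≤ y) := by
          simp only [Finset.mem_filter, Finset.mem_univ, true_and]
          exact ⟨hgT, hsg, le_trans hgz hz.2⟩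
        rw [Finset.sum_eq_single_of_mem g hgmem]
        · rw [if_pos ⟨hz.2, hgT, hgz, hgmax⟩]
        · intro b hb hbg
          rw [if_neg]
          rintro ⟨_, hbT, hbz, hbmax⟩
          exact hbg (le_antisymm (hgmax b hbT hbz) (hbmax g hgT hgz))
      · rw [if_neg hz]
        refine Finset.sum_eq_zero (fun t ht => ?_)
        simp only [Finset.mem_filter, Finset.mem_univ, true_and] at ht
        rw [if_neg]
        rintro ⟨hzy, _, htz, _⟩
        exact hz ⟨le_trans ht.2.1 htz, hzy⟩
    rw [hswap, hμ₂ s y hsy]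
  -- main induction
  intro s hs y hy hsy
  revert hs hsy
  refine (Finite.to_wellFoundedGT.wf).induction
    (C := fun s => s ∈ T → s ≤ y → η s y = μT s y) s ?_
  intro s ih hs hsy
  rcases eq_or_lt_of_le hsy with rfl | hlt
  · rw [hA s hs, hμT₁ s hs]
  · have h1 := hB s hs y hy hlt
    have h2 := hμT₂ s hs y hy hlt
    have hmem : s ∈ Finset.univ.filter (fun t => t ∈ T ∧ s ≤ t ∧ t ≤ y) := by
      simp only [Finset.mem_filter, Finset.mem_univ, true_and]
      exact ⟨hs, le_rfl, le_of_lt hlt⟩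
    rw [← Finset.add_sum_erase _ _ hmem] at h1 h2
    have hsum : ∑ t ∈ (Finset.univ.filter (fun t => t ∈ T ∧ s ≤ t ∧ t ≤ y)).erase s, η t y
        = ∑ t ∈ (Finset.univ.filter (fun t => t ∈ T ∧ s ≤ t ∧ t ≤ y)).erase s, μT t y := by
      refine Finset.sum_congr rfl (fun t ht => ?_)
      simp only [Finset.mem_erase, Finset.mem_filter, Finset.mem_univ, true_and] at ht
      exact ih t (lt_of_le_of_ne ht.2.2.1 (Ne.symm ht.1)) ht.2.1 ht.2.2.2
    linarith
end

section
/- Let (P, ≤) be a finite partially ordered set, f : P → ℝ, g its zeta transform, and T ⊆ P a sup-closed subset with supp(f) ⊆ T. Then for every y ∈ P \ T: f(y) = 0; if the set {t ∈ T : t ≤ y} is nonempty, then it has a greatest element s and g(y) = g(s); and if {t ∈ T : t ≤ y} is empty, then g(y) = 0. -/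
open Classical

/-- **Images of non focal points.** Outside a sup-closed superset `T` of the support
of `f`, `f` vanishes, and the zeta transform `g` takes the value of the greatest
element of `T` below (or `0` if there is none). -/
theorem stmt_4 {P : Type*} [PartialOrder P] [Fintype P]
    (f g : P → ℝ)
    (hg : ∀ y : P, g y = ∑ x ∈ Finset.univ.filter (fun x => x ≤ y), f x)
    (T : Set P)
    (hT : ∀ F : Set P, F ⊆ T → F.Nonempty → ∃ s ∈ T, IsLUB F s)
    (hsupp : ∀ x : P, f x ≠ 0 → x ∈ T) :
    ∀ y : P, y ∉ T →
      f y = 0 ∧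
      ((∃ t ∈ T, t ≤ y) →
        ∃ s ∈ T, s ≤ y ∧ (∀ t ∈ T, t ≤ y → t ≤ s) ∧ g y = g s) ∧
      ((¬ ∃ t ∈ T, t ≤ y) → g y = 0) := by
  intro y hy
  refine ⟨?_, ?_, ?_⟩
  · by_contra h
    exact hy (hsupp y h)
  · rintro ⟨t, ht, hty⟩
    obtain ⟨s, hsT, hlub⟩ := hT {x | x ∈ T ∧ x ≤ y} (fun x hx => hx.1) ⟨t, ht, hty⟩
    have hsy : s ≤ y := hlub.2 (fun x hx => hx.2)
    have hmax : ∀ t ∈ T, t ≤ y → t ≤ s := fun t ht hty => hlub.1 ⟨ht, hty⟩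
    refine ⟨s, hsT, hsy, hmax, ?_⟩
    rw [hg, hg]
    refine (Finset.sum_subset ?_ ?_).symm
    · intro x hx
      simp only [Finset.mem_filter, Finset.mem_univ, true_and] at *
      exact hx.trans hsy
    · intro x hx hxs
      simp only [Finset.mem_filter, Finset.mem_univ, true_and] at *
      by_contra h
      exact hxs (hmax x (hsupp x h) hx)
  · intro h
    rw [hg]
    apply Finset.sum_eq_zero
    intro x hx
    simp only [Finset.mem_filter, Finset.mem_univ, true_and] at hx
    by_contra hfx
    exact h ⟨x, hsupp x hfx, hx⟩
end

section
/- Let (P, ≤, ⊔) be a finite join-semilattice, f : P → ℝ, and g its zeta transform. Let 𝒢 be a partition of P such that for every part X ∈ 𝒢: g is constant on X, and every y ∈ P for which there exist a minimal element a of X with a ≤ y and a maximal element b of X with y ≤ b belongs to X. Let G be the set of all elements of P that are minimal in their part of 𝒢, let M = {y ∈ P : y is minimal in P and g(y) = 0}, and let Y = {x ⊔ a : x ∈ G \ M, a ∈ M}. Then ^∨(supp f) ⊆ ^∨(Y ∪ (G \ M)) ⊆ ^∨(G). -/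
open Classical

/-- The join-closure of a subset of a join-semilattice: the set of all suprema of
nonempty (finite) subsets. -/
def joinClosure {P : Type*} [SemilatticeSup P] (S : Set P) : Set P :=
  {y | ∃ F : Finset P, ∃ hF : F.Nonempty, ↑F ⊆ S ∧ y = F.sup' hF id}

theorem mem_joinClosure_self {P : Type*} [SemilatticeSup P] {S : Set P} {a : P}
    (ha : a ∈ S) : a ∈ joinClosure S :=
  ⟨{a}, Finset.singleton_nonempty a, by simpa using ha, by simp⟩

theorem joinClosure_sup_mem {P : Type*} [SemilatticeSup P] {S : Set P} {a b : P}
    (ha : a ∈ joinClosure S) (hb : b ∈ joinClosure S) : a ⊔ b ∈ joinClosure S := by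
  obtain ⟨F, hF, hFS, rfl⟩ := ha
  obtain ⟨F', hF', hFS', rfl⟩ := hb
  refine ⟨F ∪ F', hF.mono Finset.subset_union_left, ?_, ?_⟩
  · intro t ht
    rcases Finset.mem_union.mp ht with h | h
    · exact hFS h
    · exact hFS' h
  · rw [Finset.sup'_union hF hF' id]

theorem sup'_mem_joinClosure {P : Type*} [SemilatticeSup P] {T : Set P}
    {F : Finset P} (hF : F.Nonempty)
    (h : ∀ a ∈ F, a ∈ joinClosure T) : F.sup' hF id ∈ joinClosure T := by
  induction hF using Finset.Nonempty.cons_induction with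
  | singleton a => simpa using h a (by simp)
  | cons a s ha hs ih =>
    rw [Finset.sup'_cons hs]
    exact joinClosure_sup_mem (h a (by simp)) (ih fun b hb => h b (by simp [hb]))

theorem joinClosure_subset {P : Type*} [SemilatticeSup P] {S T : Set P}
    (h : S ⊆ joinClosure T) : joinClosure S ⊆ joinClosure T := by
  rintro y ⟨F, hF, hFS, rfl⟩
  exact sup'_mem_joinClosure hF (fun a ha => h (hFS ha))

/-- **Finding the focal points from an image partition of the zeta transform.** -/
theorem stmt_5 {P : Type*} [SemilatticeSup P] [Fintype P]
    (f g : P → ℝ)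
    (hg : ∀ y : P, g y = ∑ x ∈ Finset.univ.filter (fun x => x ≤ y), f x)
    (𝒢 : Set (Set P))
    (h𝒢ne : ∀ X ∈ 𝒢, X.Nonempty)
    (h𝒢disj : ∀ X ∈ 𝒢, ∀ Y ∈ 𝒢, X ≠ Y → X ∩ Y = ∅)
    (h𝒢cover : ⋃₀ 𝒢 = Set.univ)
    (h𝒢const : ∀ X ∈ 𝒢, ∀ x ∈ X, ∀ y ∈ X, g x = g y)
    (h𝒢conv : ∀ X ∈ 𝒢, ∀ y : P,
      (∃ a ∈ X, (∀ a' ∈ X, ¬ a' < a) ∧ a ≤ y) →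
      (∃ b ∈ X, (∀ b' ∈ X, ¬ b < b') ∧ y ≤ b) → y ∈ X)
    (G M Y : Set P)
    (hGdef : G = {x | ∃ X ∈ 𝒢, x ∈ X ∧ ∀ x' ∈ X, ¬ x' < x})
    (hMdef : M = {y | (∀ z : P, ¬ z < y) ∧ g y = 0})
    (hYdef : Y = {z | ∃ x ∈ G \ M, ∃ a ∈ M, z = x ⊔ a}) :
    joinClosure {x | f x ≠ 0} ⊆ joinClosure (Y ∪ (G \ M)) ∧
    joinClosure (Y ∪ (G \ M)) ⊆ joinClosure G := by
  have hwf : WellFounded ((· < ·) : P → P → Prop) := wellFounded_lt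
  have hpart : ∀ p : P, ∃ X ∈ 𝒢, p ∈ X := by
    intro p
    have : p ∈ ⋃₀ 𝒢 := by rw [h𝒢cover]; trivial
    exact Set.mem_sUnion.mp this
  have hMG : M ⊆ G := by
    intro a haM
    rw [hMdef] at haM
    obtain ⟨X, hX, haX⟩ := hpart a
    rw [hGdef]
    exact ⟨X, hX, haX, fun x' _ hx' => haM.1 x' hx'⟩
  -- J1 : joining an element of M to an element of J stays in J
  set J := joinClosure (Y ∪ (G \ M)) with hJ
  have hJ1 : ∀ z ∈ J, ∀ a ∈ M, z ⊔ a ∈ J := by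
    rintro z ⟨F, hF, hFS, rfl⟩ a haM
    obtain ⟨w, hw⟩ := hF
    have hc : ∃ c, c ≤ w ∧ c ∈ G \ M := by
      rcases hFS hw with hwY | hwG
      · rw [hYdef] at hwY
        obtain ⟨x', hx', a', _, rfl⟩ := hwY
        exact ⟨x', le_sup_left, hx'⟩
      · exact ⟨w, le_rfl, hwG⟩
    obtain ⟨c, hcw, hcG⟩ := hc
    have hcs : c ≤ F.sup' ⟨w, hw⟩ id := le_trans hcw (Finset.le_sup' id hw)
    refine ⟨insert (c ⊔ a) F, ⟨c ⊔ a, Finset.mem_insert_self _ _⟩, ?_, ?_⟩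
    · intro t ht
      rcases Finset.mem_insert.mp ht with rfl | ht
      · left
        rw [hYdef]
        exact ⟨c, hcG, a, haM, rfl⟩
      · exact hFS ht
    · rw [Finset.sup'_insert ⟨w, hw⟩ id]
      show F.sup' _ id ⊔ a = (c ⊔ a) ⊔ F.sup' _ id
      apply le_antisymm
      · exact sup_le le_sup_right (le_sup_right.trans le_sup_left)
      · exact sup_le (sup_le (hcs.trans le_sup_left) le_sup_right) le_sup_left
  have hJ2 : ∀ z ∈ J, ∀ b ∈ G \ M, z ⊔ b ∈ J := by
    rintro z ⟨F, hF, hFS, rfl⟩ b hbG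
    refine ⟨insert b F, ⟨b, Finset.mem_insert_self _ _⟩, ?_, ?_⟩
    · intro t ht
      rcases Finset.mem_insert.mp ht with rfl | ht
      · exact Or.inr hbG
      · exact hFS ht
    · rw [Finset.sup'_insert hF id]
      exact (sup_comm _ _)
  have hJ3 : ∀ (A : Finset P) (hA : A.Nonempty), (∀ a ∈ A, a ∈ G) →
      ∀ z ∈ J, z ⊔ A.sup' hA id ∈ J := by
    intro A hA
    induction hA using Finset.Nonempty.cons_induction with
    | singleton a =>
      intro hAG z hz
      simp only [Finset.sup'_singleton, id_eq]
      by_cases haM : a ∈ M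
      · exact hJ1 z hz a haM
      · exact hJ2 z hz a ⟨hAG a (by simp), haM⟩
    | cons a s ha hs ih =>
      intro hAG z hz
      rw [Finset.sup'_cons hs]
      have h1 : z ⊔ (id a ⊔ s.sup' hs id) = (z ⊔ s.sup' hs id) ⊔ a := by
        rw [sup_assoc, sup_comm (id a)]
        rfl
      rw [h1]
      have hz' : z ⊔ s.sup' hs id ∈ J := ih (fun b hb => hAG b (by simp [hb])) z hz
      by_cases haM : a ∈ M
      · exact hJ1 _ hz' a haM
      · exact hJ2 _ hz' a ⟨hAG a (by simp), haM⟩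
  -- main claim: the support of f lies in J
  have hsupp : ∀ x : P, f x ≠ 0 → x ∈ J := by
    intro x
    induction x using hwf.induction with
    | _ x IH =>
    intro hfx
    obtain ⟨X, hX𝒢, hxX⟩ := hpart x
    set A : Finset P :=
      Finset.univ.filter (fun a => a ∈ X ∧ (∀ a' ∈ X, ¬ a' < a) ∧ a ≤ x) with hAdef
    have hA : A.Nonempty := by
      obtain ⟨a, ha, hmin⟩ : ∃ a ∈ Finset.univ.filter (fun z => z ∈ X ∧ z ≤ x),
          ∀ y ∈ Finset.univ.filter (fun z => z ∈ X ∧ z ≤ x), ¬ y < a := by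
        obtain ⟨a, ha⟩ := Finset.exists_minimal
          (s := Finset.univ.filter (fun z => z ∈ X ∧ z ≤ x)) ⟨x, by simp [hxX]⟩
        exact ⟨a, ha.1, fun y hy hlt => lt_irrefl _ (lt_of_lt_of_le hlt (ha.2 hy hlt.le))⟩
      simp only [Finset.mem_filter, Finset.mem_univ, true_and] at ha
      refine ⟨a, ?_⟩
      simp only [hAdef, Finset.mem_filter, Finset.mem_univ, true_and]
      refine ⟨ha.1, ?_, ha.2⟩
      intro a' ha' hlt
      exact hmin a' (by simp [ha', le_of_lt (lt_of_lt_of_le hlt ha.2)]) hlt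
    have hAmem : ∀ a ∈ A, a ∈ X ∧ (∀ a' ∈ X, ¬ a' < a) ∧ a ≤ x := by
      intro a ha
      simpa only [hAdef, Finset.mem_filter, Finset.mem_univ, true_and] using ha
    have hAG : ∀ a ∈ A, a ∈ G := by
      intro a ha
      obtain ⟨h1, h2, _⟩ := hAmem a ha
      rw [hGdef]
      exact ⟨X, hX𝒢, h1, h2⟩
    set m : P := A.sup' hA id with hmdef
    have hmlex : m ≤ x := Finset.sup'_le hA id (fun a ha => (hAmem a ha).2.2)
    -- the interval [m, x] is inside X
    obtain ⟨b, hbmem, hbmax⟩ : ∃ b ∈ Finset.univ.filter (fun z => z ∈ X ∧ x ≤ z),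
        ∀ y ∈ Finset.univ.filter (fun z => z ∈ X ∧ x ≤ z), ¬ b < y := by
      obtain ⟨b, hb⟩ := Finset.exists_maximal
        (s := Finset.univ.filter (fun z => z ∈ X ∧ x ≤ z)) ⟨x, by simp [hxX]⟩
      exact ⟨b, hb.1, fun y hy hlt => lt_irrefl _ (lt_of_lt_of_le hlt (hb.2 hy hlt.le))⟩
    simp only [Finset.mem_filter, Finset.mem_univ, true_and] at hbmem
    have hbmax' : ∀ b' ∈ X, ¬ b < b' := by
      intro b' hb' hlt
      exact hbmax b' (by simp [hb', le_of_lt (lt_of_le_of_lt hbmem.2 hlt)]) hlt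
    obtain ⟨a₀, ha₀⟩ := hA
    have hA : A.Nonempty := ⟨a₀, ha₀⟩
    have hI : ∀ u : P, m ≤ u → u ≤ x → u ∈ X := by
      intro u hmu hux
      refine h𝒢conv X hX𝒢 u ?_ ?_
      · exact ⟨a₀, (hAmem a₀ ha₀).1, (hAmem a₀ ha₀).2.1,
          le_trans (Finset.le_sup' id ha₀) hmu⟩
      · exact ⟨b, hbmem.1, hbmax', le_trans hux hbmem.2⟩
    have hgI : ∀ u : P, m ≤ u → u ≤ x → g u = g x :=
      fun u h1 h2 => h𝒢const X hX𝒢 u (hI u h1 h2) x hxX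
    by_cases hcase : m = x ∧ ∃ a ∈ A, a ∉ M
    · -- direct case
      obtain ⟨hmx, a', ha'A, ha'M⟩ := hcase
      have ha'J : (a' : P) ∈ J := mem_joinClosure_self (Or.inr ⟨hAG a' ha'A, ha'M⟩)
      have ha'x : a' ≤ x := le_trans (Finset.le_sup' id ha'A) hmlex
      have := hJ3 A hA hAG a' ha'J
      rw [← hmdef, hmx] at this
      rwa [sup_eq_right.mpr ha'x] at this
    · -- get z < x with f z ≠ 0 and z ⊔ m = x
      have hzex : ∃ z : P, z < x ∧ f z ≠ 0 ∧ z ⊔ m = x := by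
        by_cases hmx : m = x
        · -- every a ∈ A is in M, so g x = 0
          have hAM : ∀ a ∈ A, a ∈ M := by
            by_contra h
            push_neg at h
            exact hcase ⟨hmx, h⟩
          have hga : g a₀ = 0 := by
            have := hAM a₀ ha₀
            rw [hMdef] at this
            exact this.2
          have hgx : g x = 0 := by
            rw [← h𝒢const X hX𝒢 a₀ (hAmem a₀ ha₀).1 x hxX, hga]
          have hsum : ∑ z ∈ Finset.univ.filter (fun z => z ≤ x), f z = 0 := by
            rw [← hg]; exact hgx
          have hsplit : Finset.univ.filter (fun z => z ≤ x)
              = insert x (Finset.univ.filter (fun z => z < x)) := by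
            ext z
            simp only [Finset.mem_filter, Finset.mem_univ, true_and, Finset.mem_insert]
            constructor
            · intro h; rcases eq_or_lt_of_le h with h | h
              · exact Or.inl h
              · exact Or.inr h
            · rintro (rfl | h)
              · exact le_rfl
              · exact h.le
          have hxnot : x ∉ Finset.univ.filter (fun z => z < x) := by simp
          rw [hsplit, Finset.sum_insert hxnot] at hsum
          have : ∑ z ∈ Finset.univ.filter (fun z => z < x), f z ≠ 0 := by
            intro h; rw [h, add_zero] at hsum; exact hfx hsum
          obtain ⟨z, hz, hfz⟩ := Finset.exists_ne_zero_of_sum_ne_zero this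
          simp only [Finset.mem_filter, Finset.mem_univ, true_and] at hz
          exact ⟨z, hz, hfz, by rw [hmx, sup_eq_right.mpr hz.le]⟩
        · have hmltx : m < x := lt_of_le_of_ne hmlex hmx
          -- zeta injectivity on the interval [m, x]
          have hR : ∀ u : P, m < u → u ≤ x →
              ∑ z ∈ Finset.univ.filter (fun z => z ≤ x ∧ z ⊔ m = u), f z = 0 := by
            intro u
            induction u using hwf.induction with
            | _ u IHu =>
            intro hmu hux
            -- T(u) = g u - g m = 0
            have hT : ∑ z ∈ Finset.univ.filter (fun z => z ≤ x ∧ z ⊔ m ≤ u ∧ ¬ z ≤ m),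
                f z = 0 := by
              have h1 : Finset.univ.filter (fun z => z ≤ x ∧ z ⊔ m ≤ u ∧ ¬ z ≤ m)
                  = Finset.univ.filter (fun z => z ≤ u ∧ ¬ z ≤ m) := by
                ext z
                simp only [Finset.mem_filter, Finset.mem_univ, true_and]
                constructor
                · rintro ⟨_, h2, h3⟩; exact ⟨le_trans le_sup_left h2, h3⟩
                · rintro ⟨h1, h2⟩; exact ⟨h1.trans hux, sup_le h1 hmu.le, h2⟩
              have h2 : Finset.univ.filter (fun z => z ≤ u ∧ z ≤ m)
                  = Finset.univ.filter (fun z => z ≤ m) := by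
                ext z
                simp only [Finset.mem_filter, Finset.mem_univ, true_and]
                exact ⟨fun h => h.2, fun h => ⟨h.trans hmu.le, h⟩⟩
              have h3 := Finset.sum_filter_add_sum_filter_not
                (Finset.univ.filter (fun z => z ≤ u)) (fun z => z ≤ m) f
              rw [Finset.filter_filter, Finset.filter_filter] at h3
              rw [h1]
              have h4 : ∑ z ∈ Finset.univ.filter (fun z => z ≤ u ∧ ¬ z ≤ m), f z
                  = g u - g m := by
                rw [hg u, hg m, ← h3, h2]
                ring
              rw [h4, hgI u hmu.le hux, hgI m le_rfl hmlex]
              ring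
            -- split off the fiber z ⊔ m = u
            have hsplit : Finset.univ.filter (fun z => z ≤ x ∧ z ⊔ m ≤ u ∧ ¬ z ≤ m)
                = Finset.univ.filter (fun z => z ≤ x ∧ z ⊔ m = u)
                  ∪ Finset.univ.filter (fun z => z ≤ x ∧ z ⊔ m < u ∧ ¬ z ≤ m) := by
              ext z
              simp only [Finset.mem_filter, Finset.mem_univ, true_and, Finset.mem_union]
              constructor
              · rintro ⟨hzx, hle, hnm⟩
                rcases eq_or_lt_of_le hle with h | h
                · exact Or.inl ⟨hzx, h⟩
                · exact Or.inr ⟨hzx, h, hnm⟩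
              · rintro (⟨hzx, h⟩ | ⟨hzx, h, hnm⟩)
                · refine ⟨hzx, h.le, ?_⟩
                  intro hzm
                  rw [sup_eq_right.mpr hzm] at h
                  exact absurd h (ne_of_lt hmu)
                · exact ⟨hzx, h.le, hnm⟩
            have hdisj : Disjoint
                (Finset.univ.filter (fun z => z ≤ x ∧ z ⊔ m = u))
                (Finset.univ.filter (fun z => z ≤ x ∧ z ⊔ m < u ∧ ¬ z ≤ m)) := by
              rw [Finset.disjoint_left]
              intro z h1 h2
              simp only [Finset.mem_filter, Finset.mem_univ, true_and] at h1 h2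
              rw [h1.2] at h2
              exact absurd h2.2.1 (lt_irrefl u)
            rw [hsplit, Finset.sum_union hdisj] at hT
            -- second summand is 0 by inner induction
            have hS2 : ∑ z ∈ Finset.univ.filter (fun z => z ≤ x ∧ z ⊔ m < u ∧ ¬ z ≤ m),
                f z = 0 := by
              rw [← Finset.sum_fiberwise_of_maps_to
                (t := Finset.univ.filter (fun v => m < v ∧ v < u ∧ v ≤ x))
                (g := fun z => z ⊔ m) ?_ f]
              · apply Finset.sum_eq_zero
                intro v hv
                simp only [Finset.mem_filter, Finset.mem_univ, true_and] at hv
                have hfib : Finset.filter (fun z => z ⊔ m = v)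
                    (Finset.univ.filter (fun z => z ≤ x ∧ z ⊔ m < u ∧ ¬ z ≤ m))
                    = Finset.univ.filter (fun z => z ≤ x ∧ z ⊔ m = v) := by
                  ext z
                  simp only [Finset.mem_filter, Finset.mem_univ, true_and]
                  constructor
                  · rintro ⟨⟨h1, _, _⟩, h4⟩; exact ⟨h1, h4⟩
                  · rintro ⟨h1, h2⟩
                    refine ⟨⟨h1, ?_, ?_⟩, h2⟩
                    · rw [h2]; exact hv.2.1
                    · intro hzm
                      rw [sup_eq_right.mpr hzm] at h2
                      exact absurd hv.1 (h2 ▸ lt_irrefl m)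
                rw [hfib]
                exact IHu v hv.2.1 hv.1 hv.2.2
              · intro z hz
                simp only [Finset.mem_filter, Finset.mem_univ, true_and] at hz ⊢
                refine ⟨?_, hz.2.1, sup_le hz.1 hmlex⟩
                exact lt_of_le_of_ne le_sup_right
                  (fun h => hz.2.2 (by rw [h]; exact le_sup_left))
            rw [hS2, add_zero] at hT
            exact hT
          -- apply at u = x
          have hRx := hR x hmltx le_rfl
          have hxmem : x ∈ Finset.univ.filter (fun z => z ≤ x ∧ z ⊔ m = x) := by
            simp [sup_eq_left.mpr hmlex]
          have hsplit : Finset.univ.filter (fun z => z ≤ x ∧ z ⊔ m = x)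
              = insert x (Finset.univ.filter (fun z => z < x ∧ z ⊔ m = x)) := by
            ext z
            simp only [Finset.mem_filter, Finset.mem_univ, true_and, Finset.mem_insert]
            constructor
            · rintro ⟨h1, h2⟩
              rcases eq_or_lt_of_le h1 with h | h
              · exact Or.inl h
              · exact Or.inr ⟨h, h2⟩
            · rintro (rfl | ⟨h1, h2⟩)
              · exact ⟨le_rfl, sup_eq_left.mpr hmlex⟩
              · exact ⟨h1.le, h2⟩
          have hxnot : x ∉ Finset.univ.filter (fun z => z < x ∧ z ⊔ m = x) := by simp
          rw [hsplit, Finset.sum_insert hxnot] at hRx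
          have : ∑ z ∈ Finset.univ.filter (fun z => z < x ∧ z ⊔ m = x), f z ≠ 0 := by
            intro h; rw [h, add_zero] at hRx; exact hfx hRx
          obtain ⟨z, hz, hfz⟩ := Finset.exists_ne_zero_of_sum_ne_zero this
          simp only [Finset.mem_filter, Finset.mem_univ, true_and] at hz
          exact ⟨z, hz.1, hfz, hz.2⟩
      obtain ⟨z, hzx, hfz, hzm⟩ := hzex
      have hzJ : z ∈ J := IH z hzx hfz
      have := hJ3 A hA hAG z hzJ
      rwa [← hmdef, hzm] at this
  constructor
  · apply joinClosure_subset
    intro x hx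
    exact hsupp x hx
  · apply joinClosure_subset
    rintro t (htY | htG)
    · rw [hYdef] at htY
      obtain ⟨x', hx', a', ha', rfl⟩ := htY
      exact joinClosure_sup_mem (mem_joinClosure_self hx'.1)
        (mem_joinClosure_self (hMG ha'))
    · exact mem_joinClosure_self htG.1
end

section
/- Let (P, ≤, ⊔) be a finite join-semilattice, f : P → ℝ nonnegative, and g its zeta transform. Let 𝒢 be a partition of P such that for every part X ∈ 𝒢: g is constant on X, and every y ∈ P for which there exist a minimal element a of X with a ≤ y and a maximal element b of X with y ≤ b belongs to X. Let G be the set of all elements of P that are minimal in their part of 𝒢, and let M = {y ∈ P : y is minimal in P and g(y) = 0}. Then ^∨(supp f) ⊆ G \ M. -/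
open Classical

/-- **Finding the focal points from an image partition when `f` is nonnegative.** -/
theorem stmt_6 {P : Type*} [SemilatticeSup P] [Fintype P]
    (f g : P → ℝ)
    (hf : ∀ x : P, 0 ≤ f x)
    (hg : ∀ y : P, g y = ∑ x ∈ Finset.univ.filter (fun x => x ≤ y), f x)
    (𝒢 : Set (Set P))
    (h𝒢ne : ∀ X ∈ 𝒢, X.Nonempty)
    (h𝒢disj : ∀ X ∈ 𝒢, ∀ Y ∈ 𝒢, X ≠ Y → X ∩ Y = ∅)
    (h𝒢cover : ⋃₀ 𝒢 = Set.univ)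
    (h𝒢const : ∀ X ∈ 𝒢, ∀ x ∈ X, ∀ y ∈ X, g x = g y)
    (h𝒢conv : ∀ X ∈ 𝒢, ∀ y : P,
      (∃ a ∈ X, (∀ a' ∈ X, ¬ a' < a) ∧ a ≤ y) →
      (∃ b ∈ X, (∀ b' ∈ X, ¬ b < b') ∧ y ≤ b) → y ∈ X)
    (G M : Set P)
    (hGdef : G = {x | ∃ X ∈ 𝒢, x ∈ X ∧ ∀ x' ∈ X, ¬ x' < x})
    (hMdef : M = {y | (∀ z : P, ¬ z < y) ∧ g y = 0}) :
    joinClosure {x | f x ≠ 0} ⊆ G \ M := by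
  rintro y ⟨F, hF, hFS, rfl⟩
  set y := F.sup' hF id with hy
  -- elements of F have positive f-value
  have hpos : ∀ x ∈ F, 0 < f x := fun x hx =>
    lt_of_le_of_ne (hf x) (Ne.symm (hFS hx))
  have hle : ∀ x ∈ F, x ≤ y := fun x hx => Finset.le_sup' id hx
  -- g is strictly larger at y than at any a' < y
  have hgt : ∀ a' : P, a' < y → g a' < g y := by
    intro a' ha'
    obtain ⟨x₀, hx₀F, hx₀⟩ : ∃ x₀ ∈ F, ¬ x₀ ≤ a' := by
      by_contra h
      push_neg at h
      exact absurd (Finset.sup'_le hF id h) (not_le_of_gt ha')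
    rw [hg, hg]
    refine Finset.sum_lt_sum_of_subset ?_ ?_ ?_ (hpos x₀ hx₀F) ?_
    · intro x hx
      simp only [Finset.mem_filter, Finset.mem_univ, true_and] at hx ⊢
      exact hx.trans ha'.le
    · simp only [Finset.mem_filter, Finset.mem_univ, true_and]
      exact hle x₀ hx₀F
    · simp only [Finset.mem_filter, Finset.mem_univ, true_and]
      exact hx₀
    · intro j _ _; exact hf j
  -- g y > 0
  obtain ⟨x₀, hx₀F⟩ := hF
  have hgy : 0 < g y := by
    rw [hg]
    calc (0:ℝ) < f x₀ := hpos x₀ hx₀F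
    _ ≤ _ := by
      refine Finset.single_le_sum (fun i _ => hf i) ?_
      simp only [Finset.mem_filter, Finset.mem_univ, true_and]
      exact hle x₀ hx₀F
  constructor
  · -- y ∈ G
    have : y ∈ ⋃₀ 𝒢 := by rw [h𝒢cover]; trivial
    obtain ⟨X, hX𝒢, hyX⟩ := this
    rw [hGdef]
    refine ⟨X, hX𝒢, hyX, ?_⟩
    intro a' ha'X ha'lt
    have := h𝒢const X hX𝒢 a' ha'X y hyX
    exact absurd this (ne_of_lt (hgt a' ha'lt))
  · -- y ∉ M
    rw [hMdef]
    intro hyM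
    exact absurd hyM.2 (ne_of_gt hgy)
end

section
/- Let (P, ≤, ⊔) be a finite join-semilattice, f : P → ℝ, and h : P → ℝ with h(x) ≠ 0 for all x ∈ P, such that Σ_{x ≤ y} f(x) = Π_{x ≤ y} h(x) for every y ∈ P. Then ^∨(supp f) = ^∨({x ∈ P : h(x) ≠ 1} ∪ Min(P)), where Min(P) is the set of minimal elements of P. -/
open Classical

section Aux

variable {P : Type*} [SemilatticeSup P] [Fintype P]

/-- If `y` is in the join-closure of `S`, then `y` is the sup of all `S`-elements below it. -/
lemma jc_char {S : Set P} {y : P} (hy : y ∈ joinClosure S) :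
    ∃ hne : (Finset.univ.filter (fun x => x ∈ S ∧ x ≤ y)).Nonempty,
      y = (Finset.univ.filter (fun x => x ∈ S ∧ x ≤ y)).sup' hne id := by
  obtain ⟨F, hF, hFS, rfl⟩ := hy
  set D := Finset.univ.filter (fun x => x ∈ S ∧ x ≤ F.sup' hF id) with hD
  have hsub : F ⊆ D := fun a ha => by
    simp only [hD, Finset.mem_filter, Finset.mem_univ, true_and]
    exact ⟨hFS ha, Finset.le_sup' id ha⟩
  have hne : D.Nonempty := hF.mono hsub
  refine ⟨hne, le_antisymm (Finset.sup'_mono id hsub hF) (Finset.sup'_le _ _ ?_)⟩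
  intro b hb
  simp only [hD, Finset.mem_filter, Finset.mem_univ, true_and] at hb
  exact hb.2

/-- Any upper bound of the `S`-elements below `x` bounds `x ∈ ^∨S`. -/
lemma jc_le {S : Set P} {x m : P} (hx : x ∈ joinClosure S)
    (hm : ∀ z ∈ S, z ≤ x → z ≤ m) : x ≤ m := by
  obtain ⟨hne, hx'⟩ := jc_char hx
  rw [hx']
  refine Finset.sup'_le _ _ fun b hb => ?_
  simp only [Finset.mem_filter, Finset.mem_univ, true_and] at hb
  exact hm b hb.1 hb.2

lemma jc_trans {S T : Set P} (hST : S ⊆ joinClosure T) : joinClosure S ⊆ joinClosure T := by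
  intro y hy
  have hD : ∀ a ∈ (Finset.univ.filter (fun x => x ∈ T ∧ x ≤ y) : Finset P), a ∈ T ∧ a ≤ y := by
    intro a ha; simpa using ha
  obtain ⟨F, hF, hFS, rfl⟩ := hy
  set y := F.sup' hF id with hy'
  set D := Finset.univ.filter (fun x => x ∈ T ∧ x ≤ y) with hDdef
  obtain ⟨a, ha⟩ := hF
  have haT : a ∈ joinClosure T := hST (hFS ha)
  obtain ⟨hnea, _⟩ := jc_char haT
  obtain ⟨b, hb⟩ := hnea
  simp only [Finset.mem_filter, Finset.mem_univ, true_and] at hb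
  have hne : D.Nonempty := ⟨b, by
    simp only [hDdef, Finset.mem_filter, Finset.mem_univ, true_and]
    exact ⟨hb.1, hb.2.trans (Finset.le_sup' id ha)⟩⟩
  refine ⟨D, hne, fun x hx => (hD x hx).1, le_antisymm ?_ ?_⟩
  · refine Finset.sup'_le _ _ fun c hc => ?_
    have hc' : c ∈ joinClosure T := hST (hFS hc)
    refine jc_le hc' fun z hz hzc => ?_
    have hzD : z ∈ D := by
      simp only [hDdef, Finset.mem_filter, Finset.mem_univ, true_and]
      exact ⟨hz, hzc.trans (Finset.le_sup' id hc)⟩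
    exact Finset.le_sup' id hzD
  · exact Finset.sup'_le _ _ fun c hc => (hD c hc).2

end Aux

/-- **Link between the focal points of `f` and of `h`**: if the additive zeta
transform of `f` equals the multiplicative zeta transform of a nowhere-zero `h`,
then `^∨(supp f) = ^∨({h ≠ 1} ∪ Min(P))`. -/
theorem stmt_9 {P : Type*} [SemilatticeSup P] [Fintype P]
    (f h : P → ℝ)
    (hne : ∀ x : P, h x ≠ 0)
    (hlink : ∀ y : P,
      ∑ x ∈ Finset.univ.filter (fun x => x ≤ y), f x =
      ∏ x ∈ Finset.univ.filter (fun x => x ≤ y), h x) :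
    joinClosure {x | f x ≠ 0} =
      joinClosure ({x | h x ≠ 1} ∪ {y | ∀ z : P, ¬ z < y}) := by
  set S : Set P := {x | f x ≠ 0} with hSdef
  set T : Set P := {x | h x ≠ 1} ∪ {y | ∀ z : P, ¬ z < y} with hTdef
  -- minimal elements have f m = h m ≠ 0
  have hmin_f : ∀ m : P, (∀ z : P, ¬ z < m) → f m ≠ 0 := by
    intro m hm
    have hfilt : Finset.univ.filter (fun x => x ≤ m) = {m} := by
      ext x
      simp only [Finset.mem_filter, Finset.mem_univ, true_and, Finset.mem_singleton]
      constructor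
      · intro hx
        by_contra hne'
        exact hm x (lt_of_le_of_ne hx hne')
      · rintro rfl; exact le_rfl
    have hl := hlink m
    rw [hfilt, Finset.sum_singleton, Finset.prod_singleton] at hl
    rw [hl]
    exact hne m
  -- there is a minimal element below each y
  have hmin_below : ∀ y : P, ∃ m, m ≤ y ∧ ∀ z : P, ¬ z < m := by
    intro y
    obtain ⟨m, hm, hmin⟩ := (Finset.univ.filter (· ≤ y)).exists_minimal
      ⟨y, by simp⟩
    simp only [Finset.mem_filter, Finset.mem_univ, true_and] at hm
    refine ⟨m, hm, fun z hz => hz.not_ge (hmin ?_ hz.le)⟩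
    simp only [Finset.mem_filter, Finset.mem_univ, true_and]
    exact hz.le.trans hm
  -- splitting the down-set of y along ≤ m
  have hfs : ∀ m y : P, m ≤ y →
      Finset.univ.filter (fun x => x ≤ y) =
        Finset.univ.filter (fun x => x ≤ m) ∪
          Finset.univ.filter (fun x => x ≤ y ∧ ¬ x ≤ m) := by
    intro m y hmy
    ext x
    simp only [Finset.mem_filter, Finset.mem_union, Finset.mem_univ, true_and]
    constructor
    · intro hxy
      by_cases hxm : x ≤ m
      · exact Or.inl hxm
      · exact Or.inr ⟨hxy, hxm⟩
    · rintro (hxm | ⟨hxy, _⟩)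
      exacts [hxm.trans hmy, hxy]
  have hdisj : ∀ m y : P,
      Disjoint (Finset.univ.filter (fun x => x ≤ m))
        (Finset.univ.filter (fun x => x ≤ y ∧ ¬ x ≤ m)) := by
    intro m y
    rw [Finset.disjoint_left]
    intro x hx hx'
    simp only [Finset.mem_filter, Finset.mem_univ, true_and] at hx hx'
    exact hx'.2 hx
  -- Key 1 : supp f ⊆ ^∨ T
  have key1 : ∀ y : P, f y ≠ 0 → y ∈ joinClosure T := by
    intro y
    induction y using IsWellFounded.induction (r := (· < · : P → P → Prop)) with
    | _ y IH =>
      intro hfy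
      by_contra hyT
      set D := Finset.univ.filter (fun x => x ∈ T ∧ x ≤ y) with hDdef
      have hDne : D.Nonempty := by
        obtain ⟨m0, hm0, hmin0⟩ := hmin_below y
        exact ⟨m0, by
          simp only [hDdef, Finset.mem_filter, Finset.mem_univ, true_and]
          exact ⟨Or.inr hmin0, hm0⟩⟩
      set m := D.sup' hDne id with hmdef
      have hmy : m ≤ y := Finset.sup'_le _ _ fun b hb => by
        simp only [hDdef, Finset.mem_filter, Finset.mem_univ, true_and] at hb
        exact hb.2
      have hTm : ∀ z ∈ T, z ≤ y → z ≤ m := by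
        intro z hz hzy
        refine Finset.le_sup' id ?_
        simp only [hDdef, Finset.mem_filter, Finset.mem_univ, true_and]
        exact ⟨hz, hzy⟩
      have hlt : m < y := by
        refine lt_of_le_of_ne hmy fun heq => hyT ?_
        exact ⟨D, hDne, fun x hx => by
          simp only [hDdef, Finset.coe_filter, Set.mem_setOf_eq] at hx
          exact hx.2.1, heq.symm⟩
      have hprod : ∏ x ∈ Finset.univ.filter (fun x => x ≤ y ∧ ¬ x ≤ m), h x = 1 := by
        refine Finset.prod_eq_one fun x hx => ?_
        simp only [Finset.mem_filter, Finset.mem_univ, true_and] at hx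
        by_contra hx1
        exact hx.2 (hTm x (Or.inl hx1) hx.1)
      have hsum : ∑ x ∈ Finset.univ.filter (fun x => x ≤ y ∧ ¬ x ≤ m), f x = f y := by
        refine Finset.sum_eq_single_of_mem y ?_ ?_
        · simp only [Finset.mem_filter, Finset.mem_univ, true_and]
          exact ⟨le_rfl, hlt.not_ge⟩
        · intro x hx hxy'
          simp only [Finset.mem_filter, Finset.mem_univ, true_and] at hx
          by_contra hfx
          have hxlty : x < y := lt_of_le_of_ne hx.1 hxy'
          have hxT : x ∈ joinClosure T := IH x hxlty hfx
          exact hx.2 (jc_le hxT fun z hz hzx => hTm z hz (hzx.trans hx.1))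
      have e1 := hlink y
      have e2 := hlink m
      rw [hfs m y hmy, Finset.sum_union (hdisj m y), Finset.prod_union (hdisj m y),
        hsum, hprod, mul_one, ← e2] at e1
      exact hfy (by linarith)
  -- Key 2 : {h ≠ 1} ⊆ ^∨ S
  have key2 : ∀ y : P, h y ≠ 1 → y ∈ joinClosure S := by
    intro y
    induction y using IsWellFounded.induction (r := (· < · : P → P → Prop)) with
    | _ y IH =>
      intro hhy
      by_contra hyS
      set D := Finset.univ.filter (fun x => x ∈ S ∧ x ≤ y) with hDdef
      have hDne : D.Nonempty := by
        obtain ⟨m0, hm0, hmin0⟩ := hmin_below y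
        exact ⟨m0, by
          simp only [hDdef, Finset.mem_filter, Finset.mem_univ, true_and]
          exact ⟨hmin_f m0 hmin0, hm0⟩⟩
      set m := D.sup' hDne id with hmdef
      have hmy : m ≤ y := Finset.sup'_le _ _ fun b hb => by
        simp only [hDdef, Finset.mem_filter, Finset.mem_univ, true_and] at hb
        exact hb.2
      have hSm : ∀ z ∈ S, z ≤ y → z ≤ m := by
        intro z hz hzy
        refine Finset.le_sup' id ?_
        simp only [hDdef, Finset.mem_filter, Finset.mem_univ, true_and]
        exact ⟨hz, hzy⟩
      have hlt : m < y := by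
        refine lt_of_le_of_ne hmy fun heq => hyS ?_
        exact ⟨D, hDne, fun x hx => by
          simp only [hDdef, Finset.coe_filter, Set.mem_setOf_eq] at hx
          exact hx.2.1, heq.symm⟩
      have hsum : ∑ x ∈ Finset.univ.filter (fun x => x ≤ y ∧ ¬ x ≤ m), f x = 0 := by
        refine Finset.sum_eq_zero fun x hx => ?_
        simp only [Finset.mem_filter, Finset.mem_univ, true_and] at hx
        by_contra hfx
        exact hx.2 (hSm x hfx hx.1)
      have hprod : ∏ x ∈ Finset.univ.filter (fun x => x ≤ y ∧ ¬ x ≤ m), h x = h y := by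
        refine Finset.prod_eq_single_of_mem y ?_ ?_
        · simp only [Finset.mem_filter, Finset.mem_univ, true_and]
          exact ⟨le_rfl, hlt.not_ge⟩
        · intro x hx hxy'
          simp only [Finset.mem_filter, Finset.mem_univ, true_and] at hx
          by_contra hx1
          have hxlty : x < y := lt_of_le_of_ne hx.1 hxy'
          have hxS : x ∈ joinClosure S := IH x hxlty hx1
          exact hx.2 (jc_le hxS fun z hz hzx => hSm z hz (hzx.trans hx.1))
      have e1 := hlink y
      have e2 := hlink m
      rw [hfs m y hmy, Finset.sum_union (hdisj m y), Finset.prod_union (hdisj m y),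
        hsum, hprod, add_zero, ← e2] at e1
      -- e1 : Σ_{≤ m} f = Σ_{≤ m} f * h y
      have hP0 : (∑ x ∈ Finset.univ.filter (fun x => x ≤ m), f x) ≠ 0 := by
        rw [e2]
        exact Finset.prod_ne_zero_iff.mpr fun x _ => hne x
      have : h y = 1 := by
        have hc := mul_left_cancel₀ hP0
          (show (∑ x ∈ Finset.univ.filter (fun x => x ≤ m), f x) * 1 =
              (∑ x ∈ Finset.univ.filter (fun x => x ≤ m), f x) * h y by
            rw [mul_one]; exact e1)
        exact hc.symm
      exact hhy this
  refine Set.Subset.antisymm (jc_trans fun x hx => key1 x hx) (jc_trans ?_)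
  rintro x (hx | hx)
  · exact key2 x hx
  · exact ⟨{x}, ⟨x, Finset.mem_singleton_self x⟩, by
      simp only [Finset.coe_singleton, Set.singleton_subset_iff]
      exact hmin_f x hx, by simp⟩
end

section
/- Let (P, ≤) be a finite partially ordered set, x ∈ P, and let f, f', h, h' : P → ℝ with h and h' nowhere zero, h'(z) = h(z) for every z ≠ x, and such that for all y ∈ P: Σ_{z ≤ y} f(z) = Π_{z ≤ y} h(z) and Σ_{z ≤ y} f'(z) = Π_{z ≤ y} h'(z). Write g(y) = Σ_{z ≤ y} f(z). Then for every y ∈ P with ¬(x ≤ y) one has f'(y) = f(y), and for every y ∈ P with x ≤ y one has f'(y) = f(y) + (h'(x)/h(x) − 1) · Σ_{s : x ≤ s ≤ y} g(s) · μ_{↑x}(s, y), where μ_{↑x} is the Möbius function of the subposet {p ∈ P : x ≤ p} with the order induced from P. -/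
open Classical

/-- **Information flow from `h` to `f`** (Möbius transform of the common zeta
transform), where `μ` is the Möbius function of the upper closure `↑x`. -/
theorem stmt_11 {P : Type*} [PartialOrder P] [Fintype P]
    (x : P) (f f' h h' g : P → ℝ)
    (hne : ∀ z : P, h z ≠ 0) (hne' : ∀ z : P, h' z ≠ 0)
    (hh' : ∀ z : P, z ≠ x → h' z = h z)
    (hfh : ∀ y : P, ∑ z ∈ Finset.univ.filter (fun z => z ≤ y), f z =
      ∏ z ∈ Finset.univ.filter (fun z => z ≤ y), h z)
    (hfh' : ∀ y : P, ∑ z ∈ Finset.univ.filter (fun z => z ≤ y), f' z =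
      ∏ z ∈ Finset.univ.filter (fun z => z ≤ y), h' z)
    (hg : ∀ y : P, g y = ∑ z ∈ Finset.univ.filter (fun z => z ≤ y), f z)
    (μ : P → P → ℤ)
    (hμ₁ : ∀ s : P, x ≤ s → μ s s = 1)
    (hμ₂ : ∀ s y : P, x ≤ s → s < y →
      ∑ z ∈ Finset.univ.filter (fun z => x ≤ z ∧ s ≤ z ∧ z ≤ y), μ z y = 0) :
    (∀ y : P, ¬ x ≤ y → f' y = f y) ∧
    (∀ y : P, x ≤ y → f' y = f y +
      (h' x / h x - 1) *
        ∑ s ∈ Finset.univ.filter (fun s => x ≤ s ∧ s ≤ y), g s * (μ s y : ℝ)) := by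
  set c : ℝ := h' x / h x - 1 with hc
  -- zeta transforms agree off the upper set of x
  have hA : ∀ y : P, ¬ x ≤ y →
      ∑ z ∈ Finset.univ.filter (fun z => z ≤ y), f' z =
      ∑ z ∈ Finset.univ.filter (fun z => z ≤ y), f z := by
    intro y hy
    rw [hfh, hfh']
    refine Finset.prod_congr rfl fun z hz => hh' z ?_
    rintro rfl
    exact hy (by simpa using hz)
  -- on the upper set they differ by a factor h' x / h x
  have hB : ∀ y : P, x ≤ y →
      ∑ z ∈ Finset.univ.filter (fun z => z ≤ y), f' z =
      (h' x / h x) * ∑ z ∈ Finset.univ.filter (fun z => z ≤ y), f z := by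
    intro y hy
    rw [hfh, hfh']
    have hx : x ∈ Finset.univ.filter (fun z => z ≤ y) := by simpa using hy
    rw [← Finset.mul_prod_erase _ h' hx, ← Finset.mul_prod_erase _ h hx]
    have heq : ∏ z ∈ (Finset.univ.filter (fun z => z ≤ y)).erase x, h' z =
        ∏ z ∈ (Finset.univ.filter (fun z => z ≤ y)).erase x, h z :=
      Finset.prod_congr rfl fun z hz => hh' z (Finset.mem_erase.mp hz).1
    rw [heq]
    rw [div_mul_eq_mul_div, eq_div_iff (hne x)]
    ring
  -- split a sum over the down set as top value plus strict down set
  have hsplit : ∀ (F : P → ℝ) (y : P),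
      ∑ z ∈ Finset.univ.filter (fun z => z ≤ y), F z =
      F y + ∑ z ∈ Finset.univ.filter (fun z => z < y), F z := by
    intro F y
    have hins : Finset.univ.filter (fun z => z ≤ y) =
        insert y (Finset.univ.filter (fun z => z < y)) := by
      ext z
      simp only [Finset.mem_filter, Finset.mem_univ, true_and, Finset.mem_insert]
      constructor
      · intro hz
        rcases lt_or_eq_of_le hz with h1 | h1
        · exact Or.inr h1
        · exact Or.inl h1
      · rintro (rfl | h1)
        · exact le_refl _
        · exact h1.le
    rw [hins, Finset.sum_insert (by simp)]
  -- part 1 : f' = f off the upper set of x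
  have hpart1 : ∀ y : P, ¬ x ≤ y → f' y = f y := by
    intro y
    induction y using WellFoundedLT.induction with
    | ind y ih =>
      intro hy
      have e1 := hsplit f' y
      have e2 := hsplit f y
      have e3 : ∑ z ∈ Finset.univ.filter (fun z => z < y), f' z =
          ∑ z ∈ Finset.univ.filter (fun z => z < y), f z := by
        refine Finset.sum_congr rfl fun z hz => ?_
        have hzy : z < y := (Finset.mem_filter.mp hz).2
        exact ih z hzy (fun hxz => hy (hxz.trans hzy.le))
      have e4 := hA y hy
      linarith only [e1, e2, e3, e4]
  -- zeta transform of the difference, restricted to the upper set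
  have hzeta : ∀ s : P, x ≤ s →
      ∑ z ∈ Finset.univ.filter (fun z => x ≤ z ∧ z ≤ s), (f' z - f z) = c * g s := by
    intro s hs
    have hsp := Finset.sum_filter_add_sum_filter_not
      (Finset.univ.filter (fun z => z ≤ s)) (fun z => x ≤ z) (fun z => f' z - f z)
    rw [Finset.filter_filter, Finset.filter_filter] at hsp
    have h0 : ∑ z ∈ Finset.univ.filter (fun z => z ≤ s ∧ ¬ x ≤ z), (f' z - f z) = 0 :=
      Finset.sum_eq_zero fun z hz => by
        have := hpart1 z (Finset.mem_filter.mp hz).2.2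
        linarith only [this]
    have hall : ∑ z ∈ Finset.univ.filter (fun z => z ≤ s), (f' z - f z) = c * g s := by
      rw [Finset.sum_sub_distrib, hB s hs, hg s, hc]
      ring
    have hand : Finset.univ.filter (fun z => z ≤ s ∧ x ≤ z) =
        Finset.univ.filter (fun z => x ≤ z ∧ z ≤ s) := by
      ext z; simp [and_comm]
    rw [hand] at hsp
    linarith only [hsp, h0, hall]
  -- Möbius inversion on the upper set
  have hswap : ∀ y : P, x ≤ y →
      ∑ s ∈ Finset.univ.filter (fun s => x ≤ s ∧ s ≤ y),
        (∑ z ∈ Finset.univ.filter (fun z => x ≤ z ∧ z ≤ s), (f' z - f z)) * (μ s y : ℝ)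
      = f' y - f y := by
    intro y hy
    have hcomm := Finset.sum_comm'
      (s := Finset.univ.filter (fun s => x ≤ s ∧ s ≤ y))
      (t := fun s => Finset.univ.filter (fun z => x ≤ z ∧ z ≤ s))
      (t' := Finset.univ.filter (fun z => x ≤ z ∧ z ≤ y))
      (s' := fun z => Finset.univ.filter (fun s => x ≤ s ∧ z ≤ s ∧ s ≤ y))
      (f := fun s z => (f' z - f z) * (μ s y : ℝ))
      (by
        intro s z
        simp only [Finset.mem_filter, Finset.mem_univ, true_and]
        constructor
        · rintro ⟨⟨h1, h2⟩, h3, h4⟩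
          exact ⟨⟨h1, h4, h2⟩, h3, h4.trans h2⟩
        · rintro ⟨⟨h1, h2, h3⟩, h4, _⟩
          exact ⟨⟨h1, h3⟩, h4, h2⟩)
    simp_rw [Finset.sum_mul]
    rw [hcomm]
    rw [Finset.sum_eq_single y]
    · have hfy : Finset.univ.filter (fun s => x ≤ s ∧ y ≤ s ∧ s ≤ y) = {y} := by
        ext s
        simp only [Finset.mem_filter, Finset.mem_univ, true_and, Finset.mem_singleton]
        constructor
        · rintro ⟨_, h2, h3⟩; exact le_antisymm h3 h2
        · rintro rfl; exact ⟨hy, le_refl _, le_refl _⟩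
      rw [hfy, Finset.sum_singleton, hμ₁ y hy]
      simp
    · intro z hz hzy
      have hz' := Finset.mem_filter.mp hz
      have hlt : z < y := lt_of_le_of_ne hz'.2.2 hzy
      rw [← Finset.mul_sum]
      have h0 : ∑ s ∈ Finset.univ.filter (fun s => x ≤ s ∧ z ≤ s ∧ s ≤ y),
          (μ s y : ℝ) = 0 := by
        exact_mod_cast congrArg (fun n : ℤ => (n : ℝ)) (hμ₂ z y hz'.2.1 hlt)
      rw [h0, mul_zero]
    · intro hny
      exact absurd (Finset.mem_filter.mpr ⟨Finset.mem_univ y, hy, le_refl y⟩) hny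
  refine ⟨hpart1, fun y hy => ?_⟩
  have hk := hswap y hy
  have hrw : ∑ s ∈ Finset.univ.filter (fun s => x ≤ s ∧ s ≤ y),
      (∑ z ∈ Finset.univ.filter (fun z => x ≤ z ∧ z ≤ s), (f' z - f z)) * (μ s y : ℝ)
      = c * ∑ s ∈ Finset.univ.filter (fun s => x ≤ s ∧ s ≤ y), g s * (μ s y : ℝ) := by
    rw [Finset.mul_sum]
    refine Finset.sum_congr rfl fun s hs => ?_
    rw [hzeta s (Finset.mem_filter.mp hs).2.1]
    ring
  rw [hrw] at hk
  linarith only [hk]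
end

section
/- Let Ω be a finite set, C a subset of Ω with C ≠ Ω, and m : 2^Ω → ℝ nonnegative with Σ_{x ⊆ Ω} m(x) = 1, m(x) = 0 for every x ⊄ C (i.e. supp(m) ⊆ 2^C), and m(C) > 0. Define m' : 2^Ω → ℝ by m'(C) = 0, m'(Ω) = m(C), and m'(x) = m(x) for all other x. Let q and q' be the commonality functions of m and m' respectively. Then q(C) = q'(Ω), and for every y ⊊ C one has Π_{y ⊆ B ⊆ C} q(B)^{(−1)^{|B|−|y|+1}} = Π_{y ⊆ B ⊆ Ω} q'(B)^{(−1)^{|B|−|y|+1}} (integer exponents; all bases are nonzero since q(B) ≥ m(C) > 0 for B ⊆ C and q'(B) ≥ m'(Ω) = m(C) > 0 for all B ⊆ Ω). -/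
open Classical

lemma aux_zpow_prod {ι : Type*} {a : ℝ} (ha : a ≠ 0) (s : Finset ι) (f : ι → ℤ) :
    ∏ i ∈ s, a ^ f i = a ^ (∑ i ∈ s, f i) := by
  induction s using Finset.cons_induction with
  | empty => simp
  | cons i s hi ih => rw [Finset.prod_cons, Finset.sum_cons, zpow_add₀ ha, ih]

lemma aux_alt_sum {Ω : Type*} [Fintype Ω] [DecidableEq Ω] (y D : Finset Ω) (h : y ⊂ D) :
    ∑ B ∈ Finset.univ.filter (fun B => y ⊆ B ∧ B ⊆ D),
      ((-1 : ℤ) ^ (B.card - y.card + 1)) = 0 := by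
  have hkey : ∑ B ∈ Finset.univ.filter (fun B => y ⊆ B ∧ B ⊆ D),
      ((-1 : ℤ) ^ (B.card - y.card + 1)) =
      ∑ t ∈ (D \ y).powerset, ((-1 : ℤ) ^ (t.card + 1)) := by
    refine Finset.sum_nbij' (fun B => B \ y) (fun t => t ∪ y) ?_ ?_ ?_ ?_ ?_
    · intro B hB
      simp only [Finset.mem_filter, Finset.mem_univ, true_and] at hB
      exact Finset.mem_powerset.2 (Finset.sdiff_subset_sdiff hB.2 (le_refl y))
    · intro t ht
      simp only [Finset.mem_powerset] at ht
      simp only [Finset.mem_filter, Finset.mem_univ, true_and]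
      constructor
      · exact Finset.subset_union_right
      · exact Finset.union_subset (ht.trans (Finset.sdiff_subset)) h.subset
    · intro B hB
      simp only [Finset.mem_filter, Finset.mem_univ, true_and] at hB
      exact Finset.sdiff_union_of_subset hB.1
    · intro t ht
      simp only [Finset.mem_powerset] at ht
      have hdisj : Disjoint t y := Finset.disjoint_of_subset_left ht (Finset.sdiff_disjoint)
      show (t ∪ y) \ y = t
      rw [Finset.union_sdiff_cancel_right hdisj]
    · intro B hB
      simp only [Finset.mem_filter, Finset.mem_univ, true_and] at hB
      rw [Finset.card_sdiff_of_subset hB.1]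
  rw [hkey]
  have : ∑ t ∈ (D \ y).powerset, ((-1 : ℤ) ^ (t.card + 1)) =
      -∑ t ∈ (D \ y).powerset, ((-1 : ℤ) ^ t.card) := by
    rw [← Finset.sum_neg_distrib]
    refine Finset.sum_congr rfl fun t _ => ?_
    rw [pow_succ]; ring
  rw [this, Finset.sum_powerset_neg_one_pow_card_of_nonempty, neg_zero]
  rw [Finset.sdiff_nonempty]
  exact fun hsub => h.not_subset hsub

/-- **Discounting to `Ω` or to `C` gives the same decomposition weights.** -/
theorem stmt_12 {Ω : Type*} [Fintype Ω] [DecidableEq Ω]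
    (C : Finset Ω) (hC : C ≠ Finset.univ)
    (m m' : Finset Ω → ℝ)
    (hm0 : ∀ x : Finset Ω, 0 ≤ m x)
    (hm1 : ∑ x : Finset Ω, m x = 1)
    (hmsupp : ∀ x : Finset Ω, ¬ x ⊆ C → m x = 0)
    (hmC : 0 < m C)
    (hm'C : m' C = 0)
    (hm'univ : m' Finset.univ = m C)
    (hm' : ∀ x : Finset Ω, x ≠ C → x ≠ Finset.univ → m' x = m x)
    (q q' : Finset Ω → ℝ)
    (hq : ∀ y : Finset Ω, q y = ∑ x ∈ Finset.univ.filter (fun x => y ⊆ x), m x)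
    (hq' : ∀ y : Finset Ω, q' y = ∑ x ∈ Finset.univ.filter (fun x => y ⊆ x), m' x) :
    q C = q' Finset.univ ∧
    ∀ y : Finset Ω, y ⊂ C →
      (∏ B ∈ Finset.univ.filter (fun B => y ⊆ B ∧ B ⊆ C),
        q B ^ ((-1 : ℤ) ^ (B.card - y.card + 1))) =
      ∏ B ∈ Finset.univ.filter (fun B => y ⊆ B),
        q' B ^ ((-1 : ℤ) ^ (B.card - y.card + 1)) := by
  have hmuniv : m Finset.univ = 0 := by
    apply hmsupp
    intro h
    exact hC (le_antisymm (Finset.subset_univ C) h)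
  -- q C = m C
  have hqC : q C = m C := by
    rw [hq]
    rw [Finset.sum_eq_single C]
    · intro x hx hxC
      simp only [Finset.mem_filter, Finset.mem_univ, true_and] at hx
      apply hmsupp
      intro hsub
      exact hxC (le_antisymm hsub hx)
    · intro h
      simp at h
  -- q' univ = m C
  have hq'univ : q' Finset.univ = m C := by
    rw [hq']
    rw [Finset.sum_eq_single Finset.univ]
    · rw [hm'univ]
    · intro x hx hxu
      simp only [Finset.mem_filter, Finset.mem_univ, true_and] at hx
      exact absurd (le_antisymm (Finset.subset_univ x) hx) hxu
    · intro h
      simp at h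
  -- q' B = q B for B ⊆ C
  have hkey : ∀ B : Finset Ω, B ⊆ C → q' B = q B := by
    intro B hB
    rw [hq, hq']
    have hCmem : C ∈ Finset.univ.filter (fun x => B ⊆ x) := by
      simp [hB]
    have hCu : C ≠ Finset.univ := hC
    have humem : Finset.univ ∈ (Finset.univ.filter (fun x => B ⊆ x)).erase C := by
      simp [Ne.symm hCu]
    rw [← Finset.add_sum_erase _ m' hCmem, ← Finset.add_sum_erase _ m hCmem,
        ← Finset.add_sum_erase _ m' humem, ← Finset.add_sum_erase _ m humem]
    rw [hm'C, hm'univ, hmuniv]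
    ring_nf
    refine congrArg _ (Finset.sum_congr rfl fun x hx => ?_)
    simp only [Finset.mem_erase] at hx
    exact hm' x hx.2.1 hx.1
  -- q' B = m C for B ⊄ C
  have hkey2 : ∀ B : Finset Ω, ¬ B ⊆ C → q' B = m C := by
    intro B hB
    rw [hq']
    rw [Finset.sum_eq_single Finset.univ]
    · rw [hm'univ]
    · intro x hx hxu
      simp only [Finset.mem_filter, Finset.mem_univ, true_and] at hx
      have hxC : x ≠ C := fun h => hB (h ▸ hx)
      rw [hm' x hxC hxu]
      apply hmsupp
      exact fun h => hB (hx.trans h)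
    · intro h
      simp at h
  refine ⟨by rw [hqC, hq'univ], fun y hy => ?_⟩
  have hmCne : m C ≠ 0 := ne_of_gt hmC
  -- split RHS
  have hsplit := Finset.prod_filter_mul_prod_filter_not
    (Finset.univ.filter (fun B => y ⊆ B)) (fun B => B ⊆ C)
    (fun B => q' B ^ ((-1 : ℤ) ^ (B.card - y.card + 1)))
  rw [Finset.filter_filter, Finset.filter_filter] at hsplit
  rw [← hsplit]
  have h1 : ∏ B ∈ Finset.univ.filter (fun B => y ⊆ B ∧ B ⊆ C),
      q' B ^ ((-1 : ℤ) ^ (B.card - y.card + 1)) =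
      ∏ B ∈ Finset.univ.filter (fun B => y ⊆ B ∧ B ⊆ C),
      q B ^ ((-1 : ℤ) ^ (B.card - y.card + 1)) := by
    refine Finset.prod_congr rfl fun B hB => ?_
    simp only [Finset.mem_filter, Finset.mem_univ, true_and] at hB
    rw [hkey B hB.2]
  have h2 : ∏ B ∈ Finset.univ.filter (fun B => y ⊆ B ∧ ¬ B ⊆ C),
      q' B ^ ((-1 : ℤ) ^ (B.card - y.card + 1)) = 1 := by
    have he : ∀ B ∈ Finset.univ.filter (fun B => y ⊆ B ∧ ¬ B ⊆ C),
        q' B ^ ((-1 : ℤ) ^ (B.card - y.card + 1)) =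
        (m C) ^ ((-1 : ℤ) ^ (B.card - y.card + 1)) := by
      intro B hB
      simp only [Finset.mem_filter, Finset.mem_univ, true_and] at hB
      rw [hkey2 B hB.2]
    rw [Finset.prod_congr rfl he, aux_zpow_prod hmCne]
    have hsum : ∑ B ∈ Finset.univ.filter (fun B => y ⊆ B ∧ ¬ B ⊆ C),
        ((-1 : ℤ) ^ (B.card - y.card + 1)) = 0 := by
      have hall' : ∑ B ∈ Finset.univ.filter (fun B => y ⊆ B),
          ((-1 : ℤ) ^ (B.card - y.card + 1)) = 0 := by
        have hyu : y ⊂ Finset.univ := Finset.ssubset_of_ssubset_of_subset hy (Finset.subset_univ C)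
        have := aux_alt_sum y Finset.univ hyu
        rw [← this]
        apply Finset.sum_congr _ (fun _ _ => rfl)
        apply Finset.filter_congr
        intro B _
        simp [Finset.subset_univ]
      have hC' := aux_alt_sum y C hy
      have := Finset.sum_filter_add_sum_filter_not
        (Finset.univ.filter (fun B => y ⊆ B)) (fun B => B ⊆ C)
        (fun B => ((-1 : ℤ) ^ (B.card - y.card + 1)))
      rw [Finset.filter_filter, Finset.filter_filter, hall'] at this
      rw [hC'] at this
      linarith
    rw [hsum, zpow_zero]
  rw [h1, h2, mul_one]
end

section
/- Let Ω be a finite set, q : 2^Ω → ℝ, x ⊆ Ω, and c ∈ ℝ. Define q' : 2^Ω → ℝ by q'(y) = q(y) if y ⊆ x and q'(y) = c · q(y) otherwise. Let m(y) = Σ_{z ⊇ y} (−1)^{|z|−|y|} q(z), m'(y) = Σ_{z ⊇ y} (−1)^{|z|−|y|} q'(z), and m_{↓x}(y) = Σ_{y ⊆ z ⊆ x} (−1)^{|z|−|y|} q(z). Then for every y ⊆ x one has m'(y) = c · m(y) + (1 − c) · m_{↓x}(y), and for every y ⊆ Ω with y ⊄ x one has m'(y) = c · m(y). -/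
open Classical

/-- **Effect of rescaling the commonality function above `x` on the mass function.** -/
theorem stmt_13 {Ω : Type*} [Fintype Ω] [DecidableEq Ω]
    (q q' : Finset Ω → ℝ) (x : Finset Ω) (c : ℝ)
    (hq' : ∀ y : Finset Ω, q' y = if y ⊆ x then q y else c * q y)
    (m m' mdx : Finset Ω → ℝ)
    (hm : ∀ y : Finset Ω, m y = ∑ z ∈ Finset.univ.filter (fun z => y ⊆ z),
      (-1 : ℝ) ^ (z.card - y.card) * q z)
    (hm' : ∀ y : Finset Ω, m' y = ∑ z ∈ Finset.univ.filter (fun z => y ⊆ z),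
      (-1 : ℝ) ^ (z.card - y.card) * q' z)
    (hmdx : ∀ y : Finset Ω, mdx y = ∑ z ∈ Finset.univ.filter (fun z => y ⊆ z ∧ z ⊆ x),
      (-1 : ℝ) ^ (z.card - y.card) * q z) :
    (∀ y : Finset Ω, y ⊆ x → m' y = c * m y + (1 - c) * mdx y) ∧
    (∀ y : Finset Ω, ¬ y ⊆ x → m' y = c * m y) := by
  have key : ∀ y : Finset Ω, m' y = c * m y +
      (1 - c) * ∑ z ∈ Finset.univ.filter (fun z => y ⊆ z ∧ z ⊆ x),
        (-1 : ℝ) ^ (z.card - y.card) * q z := by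
    intro y
    have hfilt : Finset.univ.filter (fun z : Finset Ω => y ⊆ z ∧ z ⊆ x)
        = (Finset.univ.filter (fun z => y ⊆ z)).filter (fun z => z ⊆ x) := by
      rw [Finset.filter_filter]
    rw [hm', hm, hfilt, Finset.mul_sum, Finset.mul_sum]
    conv_rhs => enter [2]; rw [Finset.sum_filter]
    rw [← Finset.sum_add_distrib]
    apply Finset.sum_congr rfl
    intro z _
    rw [hq']
    by_cases h : z ⊆ x <;> simp only [h, if_true, if_false] <;> ring
  refine ⟨fun y hy => by rw [key y, hmdx], fun y hy => ?_⟩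
  rw [key y]
  have hempty : Finset.univ.filter (fun z : Finset Ω => y ⊆ z ∧ z ⊆ x) = ∅ := by
    apply Finset.filter_false_of_mem
    intro z _ h
    exact hy (h.1.trans h.2)
  simp [hempty]
end

section
/- Let Ω be a finite set and m₁, m₂ : 2^Ω → ℝ with commonality functions q₁, q₂. Define the conjunctive combination m₁₂(y) = Σ_{(s₁,s₂) : s₁ ∩ s₂ = y} m₁(s₁) · m₂(s₂), the sum ranging over all pairs of subsets of Ω whose intersection is y. Let T ⊆ 2^Ω be closed under pairwise intersection and contain supp(m₁) ∪ supp(m₂). Then for every y ∈ T one has m₁₂(y) = Σ_{s ∈ T, s ⊇ y} q₁(s) · q₂(s) · μ_{(T,⊇)}(s, y), where μ_{(T,⊇)} is the Möbius function of T ordered by reverse inclusion, and m₁₂(y) = 0 for every y ∉ T. -/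
open Classical

/-- **Efficient conjunctive combination via focal points.** -/
theorem stmt_14 {Ω : Type*} [Fintype Ω] [DecidableEq Ω]
    (m₁ m₂ : Finset Ω → ℝ)
    (q₁ q₂ : Finset Ω → ℝ)
    (hq₁ : ∀ y : Finset Ω, q₁ y = ∑ x ∈ Finset.univ.filter (fun x => y ⊆ x), m₁ x)
    (hq₂ : ∀ y : Finset Ω, q₂ y = ∑ x ∈ Finset.univ.filter (fun x => y ⊆ x), m₂ x)
    (m₁₂ : Finset Ω → ℝ)
    (hm₁₂ : ∀ y : Finset Ω, m₁₂ y = ∑ p ∈ Finset.univ.filter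
      (fun p : Finset Ω × Finset Ω => p.1 ∩ p.2 = y), m₁ p.1 * m₂ p.2)
    (T : Set (Finset Ω))
    (hTinter : ∀ a ∈ T, ∀ b ∈ T, a ∩ b ∈ T)
    (hTsupp : ∀ x : Finset Ω, m₁ x ≠ 0 ∨ m₂ x ≠ 0 → x ∈ T)
    (μ : Finset Ω → Finset Ω → ℤ)
    (hμ₁ : ∀ s ∈ T, μ s s = 1)
    (hμ₂ : ∀ s ∈ T, ∀ y ∈ T, y ⊂ s →
      ∑ z ∈ Finset.univ.filter (fun z => z ∈ T ∧ y ⊆ z ∧ z ⊆ s), μ z y = 0) :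
    (∀ y ∈ T, m₁₂ y = ∑ s ∈ Finset.univ.filter (fun s => s ∈ T ∧ y ⊆ s),
      q₁ s * q₂ s * (μ s y : ℝ)) ∧
    ∀ y : Finset Ω, y ∉ T → m₁₂ y = 0 := by
  -- m₁₂ vanishes off T
  have hzero : ∀ y : Finset Ω, y ∉ T → m₁₂ y = 0 := by
    intro y hy
    rw [hm₁₂]
    apply Finset.sum_eq_zero
    intro p hp
    simp only [Finset.mem_filter, Finset.mem_univ, true_and] at hp
    by_contra h
    have h1 : m₁ p.1 ≠ 0 := fun h0 => h (by rw [h0, zero_mul])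
    have h2 : m₂ p.2 ≠ 0 := fun h0 => h (by rw [h0, mul_zero])
    exact hy (hp ▸ hTinter _ (hTsupp _ (Or.inl h1)) _ (hTsupp _ (Or.inr h2)))
  -- key identity: q₁ s * q₂ s = ∑_{t ∈ T, s ⊆ t} m₁₂ t
  have hg : ∀ s : Finset Ω, q₁ s * q₂ s =
      ∑ t ∈ Finset.univ.filter (fun t => t ∈ T ∧ s ⊆ t), m₁₂ t := by
    intro s
    have step1 : q₁ s * q₂ s =
        ∑ p ∈ Finset.univ.filter (fun p : Finset Ω × Finset Ω => s ⊆ p.1 ∩ p.2),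
          m₁ p.1 * m₂ p.2 := by
      rw [hq₁, hq₂, Finset.sum_mul_sum, ← Finset.sum_product']
      apply Finset.sum_congr _ (fun _ _ => rfl)
      ext p
      simp [Finset.subset_inter_iff]
    have step2 : ∑ t ∈ Finset.univ.filter (fun t => s ⊆ t), m₁₂ t =
        ∑ p ∈ Finset.univ.filter (fun p : Finset Ω × Finset Ω => s ⊆ p.1 ∩ p.2),
          m₁ p.1 * m₂ p.2 := by
      rw [← Finset.sum_fiberwise_of_maps_to (g := fun p : Finset Ω × Finset Ω => p.1 ∩ p.2)
        (t := Finset.univ.filter (fun t => s ⊆ t))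
        (by intro p hp; simp only [Finset.mem_filter, Finset.mem_univ, true_and] at hp ⊢; exact hp)]
      apply Finset.sum_congr rfl
      intro t ht
      simp only [Finset.mem_filter, Finset.mem_univ, true_and] at ht
      rw [hm₁₂]
      apply Finset.sum_congr _ (fun _ _ => rfl)
      ext p
      simp only [Finset.mem_filter, Finset.mem_univ, true_and]
      exact ⟨fun h => ⟨h ▸ ht, h⟩, fun h => h.2⟩
    have step3 : ∑ t ∈ Finset.univ.filter (fun t => s ⊆ t), m₁₂ t =
        ∑ t ∈ Finset.univ.filter (fun t => t ∈ T ∧ s ⊆ t), m₁₂ t := by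
      symm
      apply Finset.sum_subset
      · intro t ht
        simp only [Finset.mem_filter, Finset.mem_univ, true_and] at ht ⊢
        exact ht.2
      · intro t ht ht'
        simp only [Finset.mem_filter, Finset.mem_univ, true_and] at ht ht'
        exact hzero t (fun hT => ht' ⟨hT, ht⟩)
    rw [step1, ← step2, step3]
  refine ⟨?_, hzero⟩
  intro y hy
  -- rewrite the RHS using hg
  have : ∑ s ∈ Finset.univ.filter (fun s => s ∈ T ∧ y ⊆ s), q₁ s * q₂ s * (μ s y : ℝ)
      = ∑ s ∈ Finset.univ.filter (fun s => s ∈ T ∧ y ⊆ s),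
          ∑ t ∈ Finset.univ.filter (fun t => t ∈ T ∧ s ⊆ t), m₁₂ t * (μ s y : ℝ) := by
    apply Finset.sum_congr rfl
    intro s _
    rw [hg s, Finset.sum_mul]
  rw [this]
  -- swap the order of summation
  rw [Finset.sum_comm' (s' := fun t => Finset.univ.filter (fun s => s ∈ T ∧ y ⊆ s ∧ s ⊆ t))
    (t' := Finset.univ.filter (fun t => t ∈ T ∧ y ⊆ t))
    (by
      intro s t
      simp only [Finset.mem_filter, Finset.mem_univ, true_and]
      constructor
      · rintro ⟨⟨hs, hys⟩, ht, hst⟩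
        exact ⟨⟨hs, hys, hst⟩, ht, hys.trans hst⟩
      · rintro ⟨⟨hs, hys, hst⟩, ht, _⟩
        exact ⟨⟨hs, hys⟩, ht, hst⟩)]
  have hinner : ∀ t ∈ Finset.univ.filter (fun t => t ∈ T ∧ y ⊆ t),
      (∑ s ∈ Finset.univ.filter (fun s => s ∈ T ∧ y ⊆ s ∧ s ⊆ t), (μ s y : ℝ))
        = if t = y then 1 else 0 := by
    intro t ht
    simp only [Finset.mem_filter, Finset.mem_univ, true_and] at ht
    by_cases hty : t = y
    · subst hty
      rw [if_pos rfl]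
      have hset : Finset.univ.filter (fun s => s ∈ T ∧ t ⊆ s ∧ s ⊆ t) = {t} := by
        ext s
        simp only [Finset.mem_filter, Finset.mem_univ, true_and, Finset.mem_singleton]
        constructor
        · rintro ⟨_, h1, h2⟩; exact Finset.Subset.antisymm h2 h1
        · intro h; subst h; exact ⟨ht.1, Finset.Subset.refl _, Finset.Subset.refl _⟩
      rw [hset, Finset.sum_singleton, hμ₁ t ht.1]
      norm_num
    · rw [if_neg hty]
      have hsub : y ⊂ t := lt_of_le_of_ne ht.2 (Ne.symm hty)
      have := hμ₂ t ht.1 y hy hsub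
      rw [← Int.cast_sum, this, Int.cast_zero]
  symm
  calc ∑ t ∈ Finset.univ.filter (fun t => t ∈ T ∧ y ⊆ t),
        ∑ s ∈ Finset.univ.filter (fun s => s ∈ T ∧ y ⊆ s ∧ s ⊆ t), m₁₂ t * (μ s y : ℝ)
      = ∑ t ∈ Finset.univ.filter (fun t => t ∈ T ∧ y ⊆ t),
          m₁₂ t * (if t = y then 1 else 0) := by
        apply Finset.sum_congr rfl
        intro t ht
        rw [← Finset.mul_sum, hinner t ht]
    _ = ∑ t ∈ Finset.univ.filter (fun t => t ∈ T ∧ y ⊆ t),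
          (if t = y then m₁₂ t else 0) := by
        apply Finset.sum_congr rfl
        intro t _
        split <;> simp
    _ = m₁₂ y := by
        rw [Finset.sum_ite_eq' _ y m₁₂]
        simp [hy]
end

section
/- Let Ω be a finite set, C ⊆ Ω, and q : 2^Ω → ℝ with q(D) ≠ 0 for every D ⊆ C. Define the weight function w^C : 2^C → ℝ by w^C(A) = Π_{A ⊆ D ⊆ C} q(D)^{(−1)^{|D|−|A|+1}} (integer exponents). Then for every y ⊆ C one has Π_{y ⊆ B ⊆ C} w^C(B) = q(y)^{−1}; in particular, if q(∅) = 1 then Π_{B ⊆ C} w^C(B) = 1. -/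
open Classical

private lemma prod_zpow_sum' {α : Type*} (a : ℝ) (ha : a ≠ 0) (s : Finset α) (f : α → ℤ) :
    ∏ i ∈ s, a ^ f i = a ^ (∑ i ∈ s, f i) := by
  induction s using Finset.cons_induction with
  | empty => simp
  | cons x s hx ih => rw [Finset.prod_cons, Finset.sum_cons, zpow_add₀ ha, ih]

private lemma mobius_sum {Ω : Type*} [Fintype Ω] [DecidableEq Ω] (y D : Finset Ω)
    (hyD : y ⊆ D) :
    (∑ B ∈ Finset.univ.filter (fun B => y ⊆ B ∧ B ⊆ D),
      (-1 : ℤ) ^ (D.card - B.card + 1)) = if D = y then -1 else 0 := by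
  have hre : (∑ B ∈ Finset.univ.filter (fun B => y ⊆ B ∧ B ⊆ D),
      (-1 : ℤ) ^ (D.card - B.card + 1))
      = ∑ A ∈ (D \ y).powerset, (-1 : ℤ) ^ ((D \ y).card - A.card + 1) := by
    apply Finset.sum_nbij' (i := fun B => B \ y) (j := fun A => A ∪ y)
    · intro B hB
      simp only [Finset.mem_filter, Finset.mem_univ, true_and] at hB
      exact Finset.mem_powerset.mpr (Finset.sdiff_subset_sdiff hB.2 (le_refl y))
    · intro A hA
      simp only [Finset.mem_powerset] at hA
      simp only [Finset.mem_filter, Finset.mem_univ, true_and]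
      constructor
      · exact Finset.subset_union_right
      · exact Finset.union_subset (hA.trans Finset.sdiff_subset) hyD
    · intro B hB
      simp only [Finset.mem_filter, Finset.mem_univ, true_and] at hB
      rw [Finset.sdiff_union_of_subset hB.1]
    · intro A hA
      simp only [Finset.mem_powerset] at hA
      rw [Finset.union_sdiff_right, Finset.sdiff_eq_self_iff_disjoint.mpr]
      exact Finset.disjoint_of_subset_left hA Finset.sdiff_disjoint
    · intro B hB
      simp only [Finset.mem_filter, Finset.mem_univ, true_and] at hB
      congr 2
      have h1 := Finset.card_le_card hB.1
      have h2 := Finset.card_le_card hB.2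
      rw [Finset.card_sdiff_of_subset hyD, Finset.card_sdiff_of_subset hB.1]
      omega
  rw [hre]
  have hcard : ∀ A ∈ (D \ y).powerset,
      (-1 : ℤ) ^ ((D \ y).card - A.card + 1)
      = (-(-1 : ℤ) ^ (D \ y).card) * (-1 : ℤ) ^ A.card := by
    intro A hA
    have hle : A.card ≤ (D \ y).card :=
      Finset.card_le_card (Finset.mem_powerset.mp hA)
    have h1 : (-1 : ℤ) ^ ((D \ y).card - A.card) * (-1 : ℤ) ^ A.card
        = (-1 : ℤ) ^ (D \ y).card := by
      rw [← pow_add, Nat.sub_add_cancel hle]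
    have h2 : ((-1 : ℤ) ^ A.card) * ((-1 : ℤ) ^ A.card) = 1 := by
      rw [← pow_add, ← two_mul, pow_mul]; norm_num
    calc (-1 : ℤ) ^ ((D \ y).card - A.card + 1)
        = -((-1 : ℤ) ^ ((D \ y).card - A.card)) := by rw [pow_succ]; ring
      _ = -((-1 : ℤ) ^ ((D \ y).card - A.card) * (((-1 : ℤ) ^ A.card) * ((-1 : ℤ) ^ A.card))) := by
          rw [h2]; ring
      _ = (-(-1 : ℤ) ^ (D \ y).card) * (-1 : ℤ) ^ A.card := by
          rw [← mul_assoc, h1]; ring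
  rw [Finset.sum_congr rfl hcard, ← Finset.mul_sum,
    Finset.sum_powerset_neg_one_pow_card]
  by_cases h : D \ y = ∅
  · have hDy : D = y := le_antisymm (by
      intro x hx
      by_contra hxy
      exact absurd (Finset.mem_sdiff.mpr ⟨hx, hxy⟩) (by simp [h])) hyD
    simp [h, hDy]
  · have hDy : D ≠ y := by
      intro hc; subst hc; simp at h
    simp [h, hDy]

/-- **The generalized conjunctive weights multiplicatively invert to `q` on `2^C`.** -/
theorem stmt_15 {Ω : Type*} [Fintype Ω] [DecidableEq Ω]
    (C : Finset Ω) (q : Finset Ω → ℝ)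
    (hq : ∀ D : Finset Ω, D ⊆ C → q D ≠ 0)
    (w : Finset Ω → ℝ)
    (hw : ∀ A : Finset Ω, A ⊆ C → w A =
      ∏ D ∈ Finset.univ.filter (fun D => A ⊆ D ∧ D ⊆ C),
        q D ^ ((-1 : ℤ) ^ (D.card - A.card + 1))) :
    (∀ y : Finset Ω, y ⊆ C →
      (∏ B ∈ Finset.univ.filter (fun B => y ⊆ B ∧ B ⊆ C), w B) = (q y)⁻¹) ∧
    (q ∅ = 1 → (∏ B ∈ Finset.univ.filter (fun B => B ⊆ C), w B) = 1) := by
  have key : ∀ y : Finset Ω, y ⊆ C →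
      (∏ B ∈ Finset.univ.filter (fun B => y ⊆ B ∧ B ⊆ C), w B) = (q y)⁻¹ := by
    intro y hy
    rw [Finset.prod_congr rfl (fun B hB => hw B
      (Finset.mem_filter.mp hB).2.2)]
    rw [Finset.prod_comm' (t' := Finset.univ.filter (fun D => y ⊆ D ∧ D ⊆ C))
      (s' := fun D => Finset.univ.filter (fun B => y ⊆ B ∧ B ⊆ D))
      (fun B D => by
        simp only [Finset.mem_filter, Finset.mem_univ, true_and]
        constructor
        · rintro ⟨⟨h1, h2⟩, h3, h4⟩
          exact ⟨⟨h1, h3⟩, h1.trans h3, h4⟩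
        · rintro ⟨⟨h1, h3⟩, h2, h4⟩
          exact ⟨⟨h1, h3.trans h4⟩, h3, h4⟩)]
    have hstep : ∀ D ∈ Finset.univ.filter (fun D => y ⊆ D ∧ D ⊆ C),
        (∏ B ∈ Finset.univ.filter (fun B => y ⊆ B ∧ B ⊆ D),
          q D ^ ((-1 : ℤ) ^ (D.card - B.card + 1)))
        = if D = y then (q y)⁻¹ else 1 := by
      intro D hD
      simp only [Finset.mem_filter, Finset.mem_univ, true_and] at hD
      rw [prod_zpow_sum' _ (hq D hD.2), mobius_sum y D hD.1]
      by_cases h : D = y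
      · subst h; simp
      · simp [h]
    rw [Finset.prod_congr rfl hstep,
      Finset.prod_eq_single y (fun b _ hne => by simp [hne])
        (fun h => absurd (by simp [hy] : y ∈ _) h)]
    simp
  refine ⟨key, fun h0 => ?_⟩
  have := key ∅ (Finset.empty_subset C)
  simp only [Finset.empty_subset, true_and] at this
  rw [this, h0, inv_one]
end

section
/- Let Ω be a finite set and m₁, m₂ : 2^Ω → ℝ. Define the conjunctive combination m₁₂(y) = Σ_{(s₁,s₂) : s₁ ∩ s₂ = y} m₁(s₁) · m₂(s₂), the sum ranging over all pairs of subsets of Ω whose intersection is y. Then for every y ⊆ Ω one has Σ_{x ⊇ y} m₁₂(x) = (Σ_{x ⊇ y} m₁(x)) · (Σ_{x ⊇ y} m₂(x)); that is, the commonality function of the conjunctive combination is the pointwise product of the commonality functions of m₁ and m₂. -/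
open Classical

/-- **The commonality function of a conjunctive combination is the pointwise
product of the commonality functions.** -/
theorem stmt_17 {Ω : Type*} [Fintype Ω] [DecidableEq Ω]
    (m₁ m₂ m₁₂ : Finset Ω → ℝ)
    (hm₁₂ : ∀ y : Finset Ω, m₁₂ y = ∑ p ∈ Finset.univ.filter
      (fun p : Finset Ω × Finset Ω => p.1 ∩ p.2 = y), m₁ p.1 * m₂ p.2) :
    ∀ y : Finset Ω,
      ∑ x ∈ Finset.univ.filter (fun x => y ⊆ x), m₁₂ x =
      (∑ x ∈ Finset.univ.filter (fun x => y ⊆ x), m₁ x) *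
      (∑ x ∈ Finset.univ.filter (fun x => y ⊆ x), m₂ x) := by
  intro y
  simp_rw [hm₁₂]
  rw [Finset.sum_fiberwise_eq_sum_filter Finset.univ
      (Finset.univ.filter (fun x => y ⊆ x))
      (fun p : Finset Ω × Finset Ω => p.1 ∩ p.2) (fun p => m₁ p.1 * m₂ p.2),
      Finset.sum_mul_sum, ← Finset.sum_product']
  rw [← Finset.filter_product]
  apply Finset.sum_congr
  · congr 1
    ext p
    simp [Finset.subset_inter_iff]
  · intros; rfl
end
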